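/- arXiv:2203.15301 — 4 statements merged into one kernel-verified Lean document; each statement's English description precedes it below -/
import Mathlib

section
/- Let μ = Σ_{n=0}^∞ (3^{-n} δ_{-2^{-n}} + 2^{-n} δ_{2^{-n}}) be the finite Borel measure on ℝ fully supported on X = {0} ∪ ⋃_{n=0}^∞ {2^{-n}, -2^{-n}}, where δ_y denotes the point mass at y. Then μ is not doubling: for every C ≥ 1 there exist x ∈ X and r > 0 with μ(B(x,2r)) > C μ(B(x,r)). -/
open MeasureTheory Metric Set
open scoped NNReal ENNReal

/-- The measure `μ = Σ_{n=0}^∞ (3^{-n} δ_{-2^{-n}} + 2^{-n} δ_{2^{-n}})` on `ℝ`. -/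
noncomputable def nuEx : Measure ℝ :=
  Measure.sum fun n : ℕ =>
    ((3 : ℝ≥0∞)⁻¹ ^ n • Measure.dirac (-((2 : ℝ)⁻¹ ^ n))) +
    ((2 : ℝ≥0∞)⁻¹ ^ n • Measure.dirac ((2 : ℝ)⁻¹ ^ n))

/-- The support `X = {0} ∪ ⋃_{n=0}^∞ {2^{-n}, -2^{-n}}` of `nuEx`. -/
def XEx : Set ℝ := {0} ∪ ⋃ n : ℕ, {(2 : ℝ)⁻¹ ^ n, -((2 : ℝ)⁻¹ ^ n)}

/-- The measure `nuEx` is not doubling: for every `C ≥ 1` there are a point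
`x` of `X` and a radius `r > 0` with `μ(B(x,2r)) > C μ(B(x,r))`. -/
theorem nuEx_not_doubling :
    ∀ C : ℝ, 1 ≤ C → ∃ x ∈ XEx, ∃ r : ℝ, 0 < r ∧
      ENNReal.ofReal C * nuEx (closedBall x r) < nuEx (closedBall x (2 * r)) := by
  intro C hC
  obtain ⟨n, hn⟩ := pow_unbounded_of_one_lt (3 * C) (by norm_num : (1:ℝ) < 3/2)
  set N := n + 1 with hN
  set x : ℝ := -((2:ℝ)⁻¹ ^ N) with hx
  set r : ℝ := (2:ℝ)⁻¹ ^ N with hr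
  refine ⟨x, Or.inr (mem_iUnion.2 ⟨N, mem_insert_iff.2 (Or.inr rfl)⟩), r, by positivity, ?_⟩
  -- membership facts
  have hpow : ∀ m k : ℕ, ((2:ℝ)⁻¹ ^ m ≤ 2⁻¹ ^ k) ↔ k ≤ m := fun m k =>
    (pow_right_strictAnti₀ (by norm_num) (by norm_num : (2:ℝ)⁻¹ < 1)).le_iff_ge
  have hpos : ∀ m : ℕ, (2:ℝ)⁻¹ ^ m ∉ closedBall x r := by
    intro m hm
    rw [mem_closedBall, Real.dist_eq, hx, sub_neg_eq_add,
      abs_of_pos (by positivity)] at hm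
    have : (0:ℝ) < 2⁻¹ ^ m := by positivity
    linarith
  have hneg : ∀ m : ℕ, (-((2:ℝ)⁻¹ ^ m) ∈ closedBall x r) ↔ n ≤ m := by
    intro m
    rw [mem_closedBall, Real.dist_eq, hx, sub_neg_eq_add, neg_add_eq_sub, abs_le]
    constructor
    · intro ⟨h1, _⟩
      have : (2:ℝ)⁻¹ ^ m ≤ 2⁻¹ ^ n := by
        have : (2:ℝ)⁻¹ ^ n = 2 * 2⁻¹ ^ N := by rw [hN, pow_succ]; ring
        rw [this]; linarith
      exact (hpow m n).1 this
    · intro h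
      have h1 : (2:ℝ)⁻¹ ^ m ≤ 2⁻¹ ^ n := (hpow m n).2 h
      have h2 : (2:ℝ)⁻¹ ^ n = 2 * 2⁻¹ ^ N := by rw [hN, pow_succ]; ring
      have h3 : (0:ℝ) < 2⁻¹ ^ m := by positivity
      constructor <;> [linarith; linarith]
  -- value of small ball
  have key : nuEx (closedBall x r) = 3⁻¹ ^ n * (1 - 3⁻¹)⁻¹ := by
    rw [nuEx, Measure.sum_apply _ measurableSet_closedBall]
    have step : ∀ m : ℕ,
        (((3 : ℝ≥0∞)⁻¹ ^ m • Measure.dirac (-((2 : ℝ)⁻¹ ^ m))) +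
          ((2 : ℝ≥0∞)⁻¹ ^ m • Measure.dirac ((2 : ℝ)⁻¹ ^ m))) (closedBall x r)
          = if n ≤ m then (3 : ℝ≥0∞)⁻¹ ^ m else 0 := by
      intro m
      rw [Measure.add_apply, Measure.smul_apply, Measure.smul_apply,
        Measure.dirac_apply' _ measurableSet_closedBall,
        Measure.dirac_apply' _ measurableSet_closedBall,
        Set.indicator_of_notMem (hpos m)]
      by_cases h : n ≤ m
      · rw [Set.indicator_of_mem ((hneg m).2 h)]
        simp [h]
      · rw [Set.indicator_of_notMem (fun hmem => h ((hneg m).1 hmem))]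
        simp [h]
    rw [tsum_congr step]
    have hsupp : Function.support (fun m => if n ≤ m then (3 : ℝ≥0∞)⁻¹ ^ m else 0)
        ⊆ Set.range (fun j : ℕ => n + j) := by
      intro m hm
      have : n ≤ m := by by_contra h; simp [h] at hm
      exact ⟨m - n, by simp only []; omega⟩
    have shift := Function.Injective.tsum_eq (g := fun j : ℕ => n + j)
      (add_right_injective n) hsupp
    rw [← shift, tsum_congr (fun j : ℕ => if_pos (Nat.le_add_right n j))]
    simp_rw [pow_add]
    rw [ENNReal.tsum_mul_left, ENNReal.tsum_geometric]
  rw [key]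
  -- lower bound for big ball
  have hmem2 : (2:ℝ)⁻¹ ^ N ∈ closedBall x (2 * r) := by
    rw [mem_closedBall, Real.dist_eq, hx, sub_neg_eq_add, abs_of_pos (by positivity)]
    rw [hr]; ring_nf; rfl
  have lower : (2 : ℝ≥0∞)⁻¹ ^ N ≤ nuEx (closedBall x (2 * r)) := by
    have h1 := Measure.le_iff'.1 (Measure.le_sum (fun m : ℕ =>
      ((3 : ℝ≥0∞)⁻¹ ^ m • Measure.dirac (-((2 : ℝ)⁻¹ ^ m))) +
      ((2 : ℝ≥0∞)⁻¹ ^ m • Measure.dirac ((2 : ℝ)⁻¹ ^ m))) N) (closedBall x (2 * r))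
    refine le_trans ?_ h1
    rw [Measure.add_apply, Measure.smul_apply, Measure.smul_apply,
      Measure.dirac_apply' _ measurableSet_closedBall,
      Measure.dirac_apply' _ measurableSet_closedBall,
      Set.indicator_of_mem hmem2]
    simp [le_add_of_nonneg_left]
  refine lt_of_lt_of_le ?_ lower
  -- arithmetic
  have e1 : (3 : ℝ≥0∞)⁻¹ ^ n = ENNReal.ofReal ((3:ℝ)⁻¹ ^ n) := by
    rw [ENNReal.ofReal_pow (by norm_num), ENNReal.ofReal_inv_of_pos (by norm_num)]
    norm_num
  have e2 : (2 : ℝ≥0∞)⁻¹ ^ N = ENNReal.ofReal ((2:ℝ)⁻¹ ^ N) := by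
    rw [ENNReal.ofReal_pow (by norm_num), ENNReal.ofReal_inv_of_pos (by norm_num)]
    norm_num
  have e3 : (1 - (3:ℝ≥0∞)⁻¹)⁻¹ = ENNReal.ofReal (3/2) := by
    have h13 : (3:ℝ≥0∞)⁻¹ = ENNReal.ofReal ((3:ℝ)⁻¹) := by
      rw [ENNReal.ofReal_inv_of_pos (by norm_num)]; norm_num
    rw [h13, ← ENNReal.ofReal_one, ← ENNReal.ofReal_sub _ (by norm_num),
      ← ENNReal.ofReal_inv_of_pos (by norm_num)]
    congr 1
    norm_num
  rw [e1, e2, e3, ← ENNReal.ofReal_mul (by norm_num), ← ENNReal.ofReal_mul (by linarith)]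
  rw [ENNReal.ofReal_lt_ofReal_iff (by positivity)]
  have hb : (0:ℝ) < 3⁻¹ ^ n := by positivity
  have ha : (0:ℝ) < 2⁻¹ ^ n := by positivity
  have hquot : ((3:ℝ)/2) ^ n = 2⁻¹ ^ n / 3⁻¹ ^ n := by
    rw [← div_pow]; norm_num
  rw [hquot] at hn
  have hn' : 3 * C * 3⁻¹ ^ n < 2⁻¹ ^ n := by
    rw [lt_div_iff₀ hb] at hn; linarith
  rw [hN, pow_succ]
  nlinarith [hn', hb, ha]
end

section
/- Let μ = Σ_{n=0}^∞ (3^{-n} δ_{-2^{-n}} + 2^{-n} δ_{2^{-n}}) be the finite Borel measure on ℝ fully supported on X = {0} ∪ ⋃_{n=0}^∞ {2^{-n}, -2^{-n}}, where δ_y denotes the point mass at y. Then μ is pointwise doubling at every point of X: for every x ∈ X there is a constant C(x) ≥ 1 such that μ(B(x,2r)) ≤ C(x) μ(B(x,r)) for all r > 0. -/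
open MeasureTheory Metric Set
open scoped NNReal ENNReal

lemma nuEx_apply {s : Set ℝ} (hs : MeasurableSet s) :
    nuEx s = ∑' n : ℕ, ((3 : ℝ≥0∞)⁻¹ ^ n * s.indicator 1 (-((2 : ℝ)⁻¹ ^ n)) +
      (2 : ℝ≥0∞)⁻¹ ^ n * s.indicator 1 ((2 : ℝ)⁻¹ ^ n)) := by
  rw [nuEx, Measure.sum_apply _ hs]
  congr 1; ext n
  rw [Measure.add_apply, Measure.smul_apply, Measure.smul_apply,
    Measure.dirac_apply' _ hs, Measure.dirac_apply' _ hs, smul_eq_mul, smul_eq_mul]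

lemma geo_two : ∑' n : ℕ, (2 : ℝ≥0∞)⁻¹ ^ n = 2 := by
  rw [ENNReal.tsum_geometric, ENNReal.one_sub_inv_two, inv_inv]

lemma nuEx_atom_pos {s : Set ℝ} (n : ℕ) (h : (2 : ℝ)⁻¹ ^ n ∈ s) :
    (2 : ℝ≥0∞)⁻¹ ^ n ≤ nuEx s := by
  have h1 : ((3 : ℝ≥0∞)⁻¹ ^ n • Measure.dirac (-((2 : ℝ)⁻¹ ^ n)) +
      (2 : ℝ≥0∞)⁻¹ ^ n • Measure.dirac ((2 : ℝ)⁻¹ ^ n)) s ≤ nuEx s :=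
    Measure.le_sum _ n s
  refine le_trans ?_ h1
  rw [Measure.add_apply, Measure.smul_apply, Measure.smul_apply, smul_eq_mul, smul_eq_mul,
    Measure.dirac_apply_of_mem h, mul_one]
  exact le_add_self

lemma nuEx_atom_neg {s : Set ℝ} (n : ℕ) (h : -((2 : ℝ)⁻¹ ^ n) ∈ s) :
    (3 : ℝ≥0∞)⁻¹ ^ n ≤ nuEx s := by
  have h1 : ((3 : ℝ≥0∞)⁻¹ ^ n • Measure.dirac (-((2 : ℝ)⁻¹ ^ n)) +
      (2 : ℝ≥0∞)⁻¹ ^ n • Measure.dirac ((2 : ℝ)⁻¹ ^ n)) s ≤ nuEx s :=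
    Measure.le_sum _ n s
  refine le_trans ?_ h1
  rw [Measure.add_apply, Measure.smul_apply, Measure.smul_apply, smul_eq_mul, smul_eq_mul,
    Measure.dirac_apply_of_mem h, mul_one]
  exact self_le_add_right _ _

lemma three_inv_le_two_inv (n : ℕ) : (3 : ℝ≥0∞)⁻¹ ^ n ≤ (2 : ℝ≥0∞)⁻¹ ^ n :=
  pow_le_pow_left' (ENNReal.inv_le_inv.mpr (by norm_num)) n

lemma indicator_le_one (s : Set ℝ) (x : ℝ) : s.indicator (1 : ℝ → ℝ≥0∞) x ≤ 1 := by
  by_cases h : x ∈ s <;> simp [h]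

lemma nuEx_le_four (s : Set ℝ) : nuEx s ≤ 4 := by
  have h1 : nuEx s ≤ nuEx Set.univ := measure_mono (subset_univ s)
  refine h1.trans ?_
  rw [nuEx_apply MeasurableSet.univ]
  have h2 : ∀ n : ℕ, (3 : ℝ≥0∞)⁻¹ ^ n * Set.indicator Set.univ 1 (-((2 : ℝ)⁻¹ ^ n)) +
      (2 : ℝ≥0∞)⁻¹ ^ n * Set.indicator Set.univ 1 ((2 : ℝ)⁻¹ ^ n) ≤ 2 * (2 : ℝ≥0∞)⁻¹ ^ n := by
    intro n
    rw [Set.indicator_univ, Pi.one_apply, Pi.one_apply, mul_one, mul_one, two_mul]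
    exact add_le_add_left (three_inv_le_two_inv n) _
  calc ∑' n : ℕ, ((3 : ℝ≥0∞)⁻¹ ^ n * Set.indicator Set.univ 1 (-((2 : ℝ)⁻¹ ^ n)) +
        (2 : ℝ≥0∞)⁻¹ ^ n * Set.indicator Set.univ 1 ((2 : ℝ)⁻¹ ^ n))
      ≤ ∑' n : ℕ, 2 * (2 : ℝ≥0∞)⁻¹ ^ n := ENNReal.tsum_le_tsum h2
    _ = 2 * 2 := by rw [ENNReal.tsum_mul_left, geo_two]
    _ = 4 := by norm_num

/-- The measure `nuEx` is pointwise doubling at every point of its support: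
for every `x ∈ X` there is `C(x) ≥ 1` with `μ(B(x,2r)) ≤ C(x) μ(B(x,r))` for all `r > 0`. -/
theorem nuEx_pointwise_doubling :
    ∀ x ∈ XEx, ∃ C : ℝ, 1 ≤ C ∧ ∀ r : ℝ, 0 < r →
      nuEx (closedBall x (2 * r)) ≤ ENNReal.ofReal C * nuEx (closedBall x r) := by
  intro x hx
  have h2pow : ∀ k : ℕ, (1 : ℝ) ≤ 2 ^ k := fun k => one_le_pow₀ (by norm_num)
  have h3pow : ∀ k : ℕ, (1 : ℝ) ≤ 3 ^ k := fun k => one_le_pow₀ (by norm_num)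
  rcases hx with hx | hx
  · -- x = 0
    rw [Set.mem_singleton_iff] at hx
    subst hx
    refine ⟨8, by norm_num, fun r hr => ?_⟩
    have hex : ∃ n : ℕ, (2 : ℝ)⁻¹ ^ n ≤ r := by
      obtain ⟨n, hn⟩ := exists_pow_lt_of_lt_one hr (by norm_num : (2 : ℝ)⁻¹ < 1)
      exact ⟨n, hn.le⟩
    obtain ⟨N, hN, hNmin⟩ : ∃ N : ℕ, (2 : ℝ)⁻¹ ^ N ≤ r ∧ ∀ k < N, r < (2 : ℝ)⁻¹ ^ k :=
      ⟨Nat.find hex, Nat.find_spec hex, fun k hk => not_le.mp (Nat.find_min hex hk)⟩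
    -- lower bound
    have hlow : (2 : ℝ≥0∞)⁻¹ ^ N ≤ nuEx (closedBall 0 r) := by
      refine nuEx_atom_pos N ?_
      rw [mem_closedBall, Real.dist_eq, sub_zero, abs_of_pos (by positivity)]
      exact hN
    -- upper bound
    have hup : nuEx (closedBall 0 (2 * r)) ≤ 8 * (2 : ℝ≥0∞)⁻¹ ^ N := by
      match N, hN, hNmin with
      | 0, hN, hNmin =>
        calc nuEx (closedBall 0 (2 * r)) ≤ 4 := nuEx_le_four _
          _ ≤ 8 * (2 : ℝ≥0∞)⁻¹ ^ 0 := by norm_num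
      | m + 1, hN, hNmin =>
        have hm : r < (2 : ℝ)⁻¹ ^ m := hNmin m (by omega)
        set f : ℕ → ℝ≥0∞ := fun n =>
          (3 : ℝ≥0∞)⁻¹ ^ n * (closedBall (0:ℝ) (2 * r)).indicator 1 (-((2 : ℝ)⁻¹ ^ n)) +
          (2 : ℝ≥0∞)⁻¹ ^ n * (closedBall (0:ℝ) (2 * r)).indicator 1 ((2 : ℝ)⁻¹ ^ n) with hf
        have hzero : ∀ n < m, f n = 0 := by
          intro n hn
          have hgt : 2 * r < (2 : ℝ)⁻¹ ^ n := by
            have h1 : (2 : ℝ)⁻¹ ^ m ≤ (2 : ℝ)⁻¹ ^ (n + 1) :=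
              pow_le_pow_of_le_one (by norm_num) (by norm_num) (by omega)
            rw [pow_succ] at h1
            nlinarith
          have hgt' : 2 * r < ((2 : ℝ) ^ n)⁻¹ := by rw [← inv_pow]; exact hgt
          have hnot : ((2 : ℝ)⁻¹ ^ n) ∉ closedBall (0:ℝ) (2 * r) := by
            rw [mem_closedBall, Real.dist_eq, sub_zero, abs_of_pos (by positivity)]
            intro h; rw [inv_pow] at h; linarith
          have hnot' : (-((2 : ℝ)⁻¹ ^ n)) ∉ closedBall (0:ℝ) (2 * r) := by
            rw [mem_closedBall, Real.dist_eq, sub_zero, abs_neg, abs_of_pos (by positivity)]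
            intro h; rw [inv_pow] at h; linarith
          rw [hf]
          simp only [Set.indicator_of_notMem hnot, Set.indicator_of_notMem hnot',
            mul_zero, add_zero]
        have hsum : nuEx (closedBall 0 (2 * r)) = ∑' n : ℕ, f (n + m) := by
          rw [nuEx_apply measurableSet_closedBall]
          refine (Function.Injective.tsum_eq (g := fun n : ℕ => n + m)
            (add_left_injective m) ?_).symm
          intro n hn
          rcases le_or_gt m n with h | h
          · exact ⟨n - m, by simp; omega⟩
          · exact absurd (hzero n h) hn
        rw [hsum]
        have hterm : ∀ n : ℕ, f (n + m) ≤ 2 * (2 : ℝ≥0∞)⁻¹ ^ (n + m) := by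
          intro n
          simp only [hf]
          rw [two_mul ((2 : ℝ≥0∞)⁻¹ ^ (n + m))]
          refine add_le_add ?_ ?_
          · calc (3 : ℝ≥0∞)⁻¹ ^ (n + m) * _ ≤ (3 : ℝ≥0∞)⁻¹ ^ (n + m) * 1 :=
                mul_le_mul_right (indicator_le_one _ _) _
              _ ≤ (2 : ℝ≥0∞)⁻¹ ^ (n + m) := by rw [mul_one]; exact three_inv_le_two_inv _
          · calc (2 : ℝ≥0∞)⁻¹ ^ (n + m) * _ ≤ (2 : ℝ≥0∞)⁻¹ ^ (n + m) * 1 :=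
                mul_le_mul_right (indicator_le_one _ _) _
              _ = (2 : ℝ≥0∞)⁻¹ ^ (n + m) := mul_one _
        have h82 : (8 : ℝ≥0∞) * 2⁻¹ = 4 := by
          rw [show (8 : ℝ≥0∞) = 4 * 2 by norm_num, mul_assoc,
            ENNReal.mul_inv_cancel two_ne_zero ENNReal.ofNat_ne_top, mul_one]
        calc ∑' n : ℕ, f (n + m) ≤ ∑' n : ℕ, 2 * (2 : ℝ≥0∞)⁻¹ ^ (n + m) :=
            ENNReal.tsum_le_tsum hterm
          _ = 2 * ((∑' n : ℕ, (2 : ℝ≥0∞)⁻¹ ^ n) * (2 : ℝ≥0∞)⁻¹ ^ m) := by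
            rw [ENNReal.tsum_mul_left]
            congr 1
            rw [← ENNReal.tsum_mul_right]
            simp only [pow_add]
          _ = 4 * (2 : ℝ≥0∞)⁻¹ ^ m := by
            rw [geo_two, ← mul_assoc]; norm_num
          _ = 8 * (2 : ℝ≥0∞)⁻¹ ^ (m + 1) := by
            rw [pow_succ, mul_comm ((2:ℝ≥0∞)⁻¹ ^ m) 2⁻¹, ← mul_assoc, h82]
    calc nuEx (closedBall 0 (2 * r)) ≤ 8 * (2 : ℝ≥0∞)⁻¹ ^ N := hup
      _ ≤ ENNReal.ofReal 8 * nuEx (closedBall 0 r) := by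
        rw [ENNReal.ofReal_ofNat]
        exact mul_le_mul_right hlow 8
  · -- x = ±2⁻¹^k
    obtain ⟨k, hk⟩ := Set.mem_iUnion.mp hx
    have key : ∀ (w : ℝ≥0∞) (C : ℝ) (hC : 1 ≤ C)
        (hCw : (4 : ℝ≥0∞) ≤ ENNReal.ofReal C * w)
        (hlow : ∀ r : ℝ, 0 < r → w ≤ nuEx (closedBall x r)),
        ∃ C : ℝ, 1 ≤ C ∧ ∀ r : ℝ, 0 < r →
          nuEx (closedBall x (2 * r)) ≤ ENNReal.ofReal C * nuEx (closedBall x r) := by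
      intro w C hC hCw hlow
      refine ⟨C, hC, fun r hr => ?_⟩
      calc nuEx (closedBall x (2 * r)) ≤ 4 := nuEx_le_four _
        _ ≤ ENNReal.ofReal C * w := hCw
        _ ≤ ENNReal.ofReal C * nuEx (closedBall x r) := mul_le_mul_right (hlow r hr) _
    rcases hk with hk | hk
    · -- x = 2⁻¹^k
      subst hk
      refine key ((2 : ℝ≥0∞)⁻¹ ^ k) (4 * 2 ^ k)
        (by nlinarith [h2pow k]) ?_ (fun r hr => nuEx_atom_pos k (mem_closedBall_self hr.le))
      rw [ENNReal.ofReal_mul (by norm_num), ENNReal.ofReal_pow (by norm_num),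
        ENNReal.ofReal_ofNat, ENNReal.ofReal_ofNat, mul_assoc, ← mul_pow,
        ENNReal.mul_inv_cancel (by norm_num) (by norm_num), one_pow, mul_one]
    · -- x = -2⁻¹^k
      rw [Set.mem_singleton_iff] at hk
      subst hk
      refine key ((3 : ℝ≥0∞)⁻¹ ^ k) (4 * 3 ^ k)
        (by nlinarith [h3pow k]) ?_ (fun r hr => nuEx_atom_neg k (mem_closedBall_self hr.le))
      rw [ENNReal.ofReal_mul (by norm_num), ENNReal.ofReal_pow (by norm_num),
        ENNReal.ofReal_ofNat, ENNReal.ofReal_ofNat, mul_assoc, ← mul_pow,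
        ENNReal.mul_inv_cancel (by norm_num) (by norm_num), one_pow, mul_one]
end

section
/- Let Λ be a finite set, Σ = Λ^ℕ with the left shift σ, and let ν be a quasi-Bernoulli Borel probability measure on Σ. Then there exists a σ-invariant, ergodic, quasi-Bernoulli Borel probability measure ν' on Σ which is equivalent to ν (ν ≪ ν' and ν' ≪ ν); indeed there is a constant K ≥ 1 with K^{-1} ν([𝐢]) ≤ ν'([𝐢]) ≤ K ν([𝐢]) for every finite word 𝐢. -/
open MeasureTheory Set
open scoped NNReal ENNReal

/-- The cylinder `[w]` of infinite words starting with the finite word `w`. -/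
def cylinder {Λ : Type*} (w : List Λ) : Set (ℕ → Λ) := {x | ∀ k : Fin w.length, x k = w.get k}

/-- A quasi-Bernoulli measure on `Σ = Λ^ℕ`: there is `1 ≤ C < ∞` with
`C⁻¹ ν[𝐢]ν[𝐣] ≤ ν[𝐢𝐣] ≤ C ν[𝐢]ν[𝐣]` for all finite words `𝐢, 𝐣`. -/
def IsQuasiBernoulli {Λ : Type*} [MeasurableSpace Λ] (ν : Measure (ℕ → Λ)) : Prop :=
  ∃ C : ℝ≥0∞, 1 ≤ C ∧ C < ⊤ ∧ ∀ w v : List Λ,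
    ν (cylinder w) * ν (cylinder v) ≤ C * ν (cylinder (w ++ v)) ∧
    ν (cylinder (w ++ v)) ≤ C * (ν (cylinder w) * ν (cylinder v))

/-- The left shift `σ` on `Σ = Λ^ℕ`. -/
def shift {Λ : Type*} (x : ℕ → Λ) : ℕ → Λ := fun n => x (n + 1)

set_option linter.unusedSectionVars false

namespace QBAux

variable {Λ : Type*}

lemma shift_iterate (m : ℕ) (x : ℕ → Λ) (n : ℕ) : (shift^[m]) x n = x (n + m) := by
  induction m generalizing x n with
  | zero => rfl
  | succ m ih =>
    rw [Function.iterate_succ_apply, ih]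
    show x (n + m + 1) = x (n + (m + 1))
    ring_nf

lemma mem_cylinder (w : List Λ) (x : ℕ → Λ) :
    x ∈ cylinder w ↔ ∀ k, ∀ hk : k < w.length, x k = w[k] := by
  constructor
  · intro h k hk; simpa [List.get_eq_getElem] using h ⟨k, hk⟩
  · intro h k; simpa [List.get_eq_getElem] using h k.1 k.2

lemma mem_cylinder_ofFn {n : ℕ} (f : Fin n → Λ) (x : ℕ → Λ) :
    x ∈ cylinder (List.ofFn f) ↔ ∀ k : Fin n, x k = f k := by
  rw [mem_cylinder]
  constructor
  · intro h k
    have := h k.1 (by simp [k.2])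
    simpa [List.getElem_ofFn] using this
  · intro h k hk
    have hk' : k < n := by simpa using hk
    have := h ⟨k, hk'⟩
    simpa [List.getElem_ofFn] using this

lemma cylinder_append (w v : List Λ) :
    cylinder (w ++ v) = cylinder w ∩ (shift^[w.length]) ⁻¹' cylinder v := by
  ext x
  simp only [Set.mem_inter_iff, Set.mem_preimage, mem_cylinder]
  constructor
  · intro h
    refine ⟨fun k hk => ?_, fun k hk => ?_⟩
    · have := h k (by simp [List.length_append]; omega)
      rwa [List.getElem_append_left hk] at this
    · have h2 := h (w.length + k) (by simp [List.length_append]; omega)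
      rw [List.getElem_append_right (by omega)] at h2
      rw [shift_iterate]
      simp only [Nat.add_sub_cancel_left] at h2
      rw [Nat.add_comm k w.length]
      exact h2
  · intro ⟨h1, h2⟩ k hk
    rcases lt_or_ge k w.length with hkw | hkw
    · rw [List.getElem_append_left hkw]; exact h1 k hkw
    · have hkv : k - w.length < v.length := by
        simp [List.length_append] at hk; omega
      have := h2 (k - w.length) hkv
      rw [shift_iterate] at this
      rw [List.getElem_append_right hkw]
      convert this using 2
      omega

lemma cylinder_ofFn_append {n : ℕ} (f : Fin n → Λ) (v : List Λ) :
    cylinder (List.ofFn f ++ v) = cylinder (List.ofFn f) ∩ (shift^[n]) ⁻¹' cylinder v := by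
  rw [cylinder_append, List.length_ofFn]

lemma disjoint_cylinder_ofFn {n : ℕ} {f g : Fin n → Λ} (h : f ≠ g) :
    Disjoint (cylinder (List.ofFn f)) (cylinder (List.ofFn g)) := by
  rw [Set.disjoint_left]
  intro x hf hg
  exact h (funext fun k => ((mem_cylinder_ofFn f x).1 hf k).symm.trans
    ((mem_cylinder_ofFn g x).1 hg k))

lemma mem_cylinder_ofFn_self {n : ℕ} (x : ℕ → Λ) :
    x ∈ cylinder (List.ofFn fun k : Fin n => x k) :=
  (mem_cylinder_ofFn _ x).2 fun _ => rfl

lemma iUnion_cylinder_ofFn (n : ℕ) :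
    (⋃ f : Fin n → Λ, cylinder (List.ofFn f)) = Set.univ :=
  Set.eq_univ_of_forall fun x => Set.mem_iUnion.2 ⟨_, mem_cylinder_ofFn_self x⟩

lemma preimage_shift_iterate_cylinder (n : ℕ) (v : List Λ) :
    (shift^[n]) ⁻¹' cylinder v = ⋃ f : Fin n → Λ, cylinder (List.ofFn f ++ v) := by
  ext x
  simp only [Set.mem_iUnion, cylinder_ofFn_append, Set.mem_inter_iff, Set.mem_preimage]
  exact ⟨fun h => ⟨_, mem_cylinder_ofFn_self x, h⟩, fun ⟨f, _, h⟩ => h⟩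

section Measure

variable [MeasurableSpace Λ] [MeasurableSingletonClass Λ]

lemma measurable_shift : Measurable (shift : (ℕ → Λ) → ℕ → Λ) :=
  measurable_pi_lambda _ fun n => measurable_pi_apply (n + 1)

lemma measurable_shift_iterate (n : ℕ) : Measurable ((shift : (ℕ → Λ) → ℕ → Λ)^[n]) :=
  Measurable.iterate measurable_shift n

lemma measurableSet_cylinder (w : List Λ) : MeasurableSet (cylinder w) := by
  have : cylinder w = ⋂ k : Fin w.length, (fun x : ℕ → Λ => x k) ⁻¹' {w.get k} := by
    ext x
    simp only [Set.mem_iInter, Set.mem_preimage, Set.mem_singleton_iff]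
    exact Iff.rfl
  rw [this]
  exact MeasurableSet.iInter fun k => (measurable_pi_apply _) (measurableSet_singleton _)

variable [Fintype Λ]

lemma tsum_measure_cylinder (μ : Measure (ℕ → Λ)) (n : ℕ) :
    ∑' f : Fin n → Λ, μ (cylinder (List.ofFn f)) = μ Set.univ := by
  rw [← iUnion_cylinder_ofFn (Λ := Λ) n,
    measure_iUnion (fun f g hfg => disjoint_cylinder_ofFn hfg) fun f => measurableSet_cylinder _]

lemma measure_piUnion (μ : Measure (ℕ → Λ)) (n : ℕ) (P : (Fin n → Λ) → Prop) :
    μ (⋃ f : Fin n → Λ, ⋃ (_ : P f), cylinder (List.ofFn f))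
      = ∑' f : Fin n → Λ, μ (⋃ (_ : P f), cylinder (List.ofFn f)) := by
  refine measure_iUnion (fun f g hfg => ?_) fun f => .iUnion fun _ => measurableSet_cylinder _
  exact Disjoint.mono (Set.iUnion_subset fun _ => subset_rfl)
    (Set.iUnion_subset fun _ => subset_rfl) (disjoint_cylinder_ofFn hfg)

end Measure

end QBAux
set_option linter.unusedSectionVars false
set_option linter.unusedVariables false

section Topo

open QBAux

variable {Λ : Type*} [Fintype Λ] [MeasurableSpace Λ] [MeasurableSingletonClass Λ]
variable [TopologicalSpace Λ] [DiscreteTopology Λ]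

lemma exists_cylinder_subset {U : Set (ℕ → Λ)} (hU : IsOpen U) {x : ℕ → Λ} (hx : x ∈ U) :
    ∃ n : ℕ, cylinder (List.ofFn fun k : Fin n => x k) ⊆ U := by
  obtain ⟨I, u, h1, h2⟩ := isOpen_pi_iff.1 hU x hx
  refine ⟨I.sup id + 1, fun y hy => h2 ?_⟩
  intro a ha
  have haI : a < I.sup id + 1 := Nat.lt_succ_of_le (Finset.le_sup (f := id) ha)
  have := (mem_cylinder_ofFn _ y).1 hy ⟨a, haI⟩
  rw [this]
  exact (h1 a ha).2

/-- The approximation of an open set from inside by unions of cylinders of length `n`. -/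
def cylApprox (U : Set (ℕ → Λ)) (n : ℕ) : Set (ℕ → Λ) :=
  ⋃ f : Fin n → Λ, ⋃ (_ : cylinder (List.ofFn f) ⊆ U), cylinder (List.ofFn f)

lemma cylApprox_subset (U : Set (ℕ → Λ)) (n : ℕ) : cylApprox U n ⊆ U := by
  refine Set.iUnion_subset fun f => Set.iUnion_subset fun h => h

lemma measurableSet_cylApprox (U : Set (ℕ → Λ)) (n : ℕ) : MeasurableSet (cylApprox U n) :=
  .iUnion fun f => .iUnion fun _ => measurableSet_cylinder _

lemma cylinder_ofFn_anti {n : ℕ} (x : ℕ → Λ) :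
    cylinder (List.ofFn fun k : Fin (n + 1) => x k) ⊆ cylinder (List.ofFn fun k : Fin n => x k) := by
  intro y hy
  refine (mem_cylinder_ofFn _ y).2 fun k => ?_
  have := (mem_cylinder_ofFn _ y).1 hy ⟨k.1, Nat.lt_succ_of_lt k.2⟩
  exact this

lemma monotone_cylApprox (U : Set (ℕ → Λ)) : Monotone (cylApprox U) := by
  refine monotone_nat_of_le_succ fun n x hx => ?_
  simp only [cylApprox, Set.mem_iUnion] at hx ⊢
  obtain ⟨f, hfU, hxf⟩ := hx
  refine ⟨fun k : Fin (n + 1) => x k, ?_, mem_cylinder_ofFn_self x⟩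
  refine subset_trans (fun y hy => ?_) hfU
  refine (mem_cylinder_ofFn _ y).2 fun k => ?_
  have h1 := (mem_cylinder_ofFn _ y).1 hy ⟨k.1, Nat.lt_succ_of_lt k.2⟩
  have h2 := (mem_cylinder_ofFn _ x).1 hxf k
  exact h1.trans h2

lemma iUnion_cylApprox {U : Set (ℕ → Λ)} (hU : IsOpen U) : ⋃ n, cylApprox U n = U := by
  refine subset_antisymm (Set.iUnion_subset fun n => cylApprox_subset U n) fun x hx => ?_
  obtain ⟨n, hn⟩ := exists_cylinder_subset hU hx
  exact Set.mem_iUnion.2 ⟨n, Set.mem_iUnion.2 ⟨_, Set.mem_iUnion.2 ⟨hn, mem_cylinder_ofFn_self x⟩⟩⟩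

/-- The key extension lemma: a comparison of two finite Borel measures on all cylinders
extends to all sets. -/
lemma measure_le_of_cylinder_le {μ₁ μ₂ : Measure (ℕ → Λ)} [IsFiniteMeasure μ₂]
    [μ₂.OuterRegular] {C : ℝ≥0∞} (hC0 : C ≠ 0) (hCt : C ≠ ⊤)
    (h : ∀ w : List Λ, μ₁ (cylinder w) ≤ C * μ₂ (cylinder w)) (A : Set (ℕ → Λ)) :
    μ₁ A ≤ C * μ₂ A := by
  have hopen : ∀ U : Set (ℕ → Λ), IsOpen U → μ₁ U ≤ C * μ₂ U := by
    intro U hU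
    have key : ∀ n, μ₁ (cylApprox U n) ≤ C * μ₂ (cylApprox U n) := by
      intro n
      rw [cylApprox, measure_piUnion μ₁, measure_piUnion μ₂, ← ENNReal.tsum_mul_left]
      refine ENNReal.tsum_le_tsum fun f => ?_
      by_cases hf : cylinder (List.ofFn f) ⊆ U
      · simp only [Set.iUnion_true, hf]
        exact h _
      · simp [hf]
    calc μ₁ U = μ₁ (⋃ n, cylApprox U n) := by rw [iUnion_cylApprox hU]
      _ = ⨆ n, μ₁ (cylApprox U n) := (monotone_cylApprox U).directed_le.measure_iUnion
      _ ≤ ⨆ n, C * μ₂ (cylApprox U n) := iSup_mono key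
      _ = C * ⨆ n, μ₂ (cylApprox U n) := by rw [ENNReal.mul_iSup]
      _ = C * μ₂ (⋃ n, cylApprox U n) :=
        by rw [(monotone_cylApprox U).directed_le.measure_iUnion]
      _ = C * μ₂ U := by rw [iUnion_cylApprox hU]
  refine ENNReal.le_of_forall_pos_le_add fun ε hε hfin => ?_
  have hδ : (ε : ℝ≥0∞) / C ≠ 0 :=
    (ENNReal.div_pos (by exact_mod_cast hε.ne') hCt).ne'
  obtain ⟨U, hAU, hUo, hUlt⟩ := Set.exists_isOpen_lt_add A (measure_ne_top μ₂ A) hδ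
  calc μ₁ A ≤ μ₁ U := measure_mono hAU
    _ ≤ C * μ₂ U := hopen U hUo
    _ ≤ C * (μ₂ A + ε / C) := by exact mul_le_mul_right hUlt.le C
    _ = C * μ₂ A + C * (ε / C) := by rw [mul_add]
    _ ≤ C * μ₂ A + ε := add_le_add le_rfl ENNReal.mul_div_le

end Topo
open QBAux Filter Topology

/-- Every quasi-Bernoulli Borel probability measure `ν` on `Σ = Λ^ℕ`
is equivalent to a shift-invariant ergodic quasi-Bernoulli probability measure `ν'`;
indeed the two measures of every cylinder are comparable up to a constant `K ≥ 1`. -/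
theorem quasiBernoulli_equivalent_invariant_ergodic
    {Λ : Type*} [Fintype Λ] [Nonempty Λ] [MeasurableSpace Λ] [MeasurableSingletonClass Λ]
    (ν : Measure (ℕ → Λ)) [IsProbabilityMeasure ν]
    (hν : IsQuasiBernoulli ν) :
    ∃ ν' : Measure (ℕ → Λ), IsProbabilityMeasure ν' ∧
      Ergodic shift ν' ∧
      IsQuasiBernoulli ν' ∧
      ν ≪ ν' ∧ ν' ≪ ν ∧
      ∃ K : ℝ≥0∞, 1 ≤ K ∧ K < ⊤ ∧ ∀ w : List Λ,
        ν (cylinder w) ≤ K * ν' (cylinder w) ∧ ν' (cylinder w) ≤ K * ν (cylinder w) := by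
  classical
  obtain ⟨C, hC1, hCt, hQB⟩ := hν
  have hC0 : C ≠ 0 := (lt_of_lt_of_le zero_lt_one hC1).ne'
  have hCne : C ≠ ⊤ := hCt.ne
  letI : TopologicalSpace Λ := ⊥
  haveI : DiscreteTopology Λ := ⟨rfl⟩
  haveI : BorelSpace (ℕ → Λ) := inferInstance
  -- the iterated push-forwards of ν under the shift
  set μk : ℕ → Measure (ℕ → Λ) := fun k => Measure.map (shift^[k]) ν with hμkdef
  have hμkprob : ∀ k, IsProbabilityMeasure (μk k) := fun k =>
    Measure.isProbabilityMeasure_map (measurable_shift_iterate k).aemeasurable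
  have hμkapp : ∀ k (A : Set (ℕ → Λ)), MeasurableSet A → μk k A = ν ((shift^[k]) ⁻¹' A) :=
    fun k A hA => Measure.map_apply (measurable_shift_iterate k) hA
  -- cylinder bounds for μk
  have hμk_cyl : ∀ k (v : List Λ),
      μk k (cylinder v) ≤ C * ν (cylinder v) ∧ ν (cylinder v) ≤ C * μk k (cylinder v) := by
    intro k v
    have hsubapp : ∀ h : Fin k → Λ, cylinder (List.ofFn h ++ v) ⊆ cylinder (List.ofFn h) := by
      intro h
      rw [cylinder_ofFn_append]
      exact Set.inter_subset_left
    have hdisj : Pairwise (Function.onFun Disjoint fun f : Fin k → Λ => cylinder (List.ofFn f ++ v)) :=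
      fun f g hfg => Disjoint.mono (hsubapp f) (hsubapp g) (disjoint_cylinder_ofFn hfg)
    have hrep : μk k (cylinder v) = ∑' f : Fin k → Λ, ν (cylinder (List.ofFn f ++ v)) := by
      rw [hμkapp k _ (measurableSet_cylinder v), preimage_shift_iterate_cylinder,
        measure_iUnion hdisj fun f => measurableSet_cylinder _]
    constructor
    · rw [hrep]
      calc ∑' f : Fin k → Λ, ν (cylinder (List.ofFn f ++ v))
          ≤ ∑' f : Fin k → Λ, C * (ν (cylinder (List.ofFn f)) * ν (cylinder v)) :=
            ENNReal.tsum_le_tsum fun f => (hQB _ _).2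
        _ = C * ((∑' f : Fin k → Λ, ν (cylinder (List.ofFn f))) * ν (cylinder v)) := by
            rw [ENNReal.tsum_mul_left, ENNReal.tsum_mul_right]
        _ = C * ν (cylinder v) := by
            rw [tsum_measure_cylinder, measure_univ, one_mul]
    · calc ν (cylinder v)
          = (∑' f : Fin k → Λ, ν (cylinder (List.ofFn f))) * ν (cylinder v) := by
            rw [tsum_measure_cylinder, measure_univ, one_mul]
        _ = ∑' f : Fin k → Λ, ν (cylinder (List.ofFn f)) * ν (cylinder v) := by
            rw [ENNReal.tsum_mul_right]
        _ ≤ ∑' f : Fin k → Λ, C * ν (cylinder (List.ofFn f ++ v)) :=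
            ENNReal.tsum_le_tsum fun f => (hQB _ _).1
        _ = C * μk k (cylinder v) := by rw [ENNReal.tsum_mul_left, hrep]
  -- global bounds for μk
  have hμk_le : ∀ k (A : Set (ℕ → Λ)), μk k A ≤ C * ν A := fun k =>
    measure_le_of_cylinder_le hC0 hCne fun w => (hμk_cyl k w).1
  have hle_μk : ∀ k (A : Set (ℕ → Λ)), ν A ≤ C * μk k A := fun k => by
    haveI := hμkprob k
    exact measure_le_of_cylinder_le hC0 hCne fun w => (hμk_cyl k w).2
  -- Cesàro averages
  set νn : ℕ → Measure (ℕ → Λ) :=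
    fun n => ((n : ℝ≥0∞) + 1)⁻¹ • ∑ k ∈ Finset.range (n + 1), μk k with hνndef
  have hνnapp : ∀ n (A : Set (ℕ → Λ)),
      νn n A = ((n : ℝ≥0∞) + 1)⁻¹ * ∑ k ∈ Finset.range (n + 1), μk k A := by
    intro n A
    rw [hνndef]
    simp [Measure.smul_apply, Measure.finset_sum_apply, smul_eq_mul]
  have hn0 : ∀ n : ℕ, ((n : ℝ≥0∞) + 1) ≠ 0 := fun n => by simp
  have hnt : ∀ n : ℕ, ((n : ℝ≥0∞) + 1) ≠ ⊤ := fun n => by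
    simp [ENNReal.add_eq_top]
  have hcard : ∀ n : ℕ, ((n : ℝ≥0∞) + 1)⁻¹ * ((n : ℝ≥0∞) + 1) = 1 := fun n =>
    ENNReal.inv_mul_cancel (hn0 n) (hnt n)
  have hconst_sum : ∀ (n : ℕ) (x : ℝ≥0∞),
      ∑ _k ∈ Finset.range (n + 1), x = ((n : ℝ≥0∞) + 1) * x := by
    intro n x
    rw [Finset.sum_const, Finset.card_range, nsmul_eq_mul]
    push_cast
    ring
  have hνn_le : ∀ n (A : Set (ℕ → Λ)), νn n A ≤ C * ν A := by
    intro n A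
    rw [hνnapp]
    calc ((n : ℝ≥0∞) + 1)⁻¹ * ∑ k ∈ Finset.range (n + 1), μk k A
        ≤ ((n : ℝ≥0∞) + 1)⁻¹ * ∑ _k ∈ Finset.range (n + 1), C * ν A :=
          mul_le_mul_right (Finset.sum_le_sum fun k _ => hμk_le k A) _
      _ = ((n : ℝ≥0∞) + 1)⁻¹ * (((n : ℝ≥0∞) + 1) * (C * ν A)) := by rw [hconst_sum]
      _ = C * ν A := by rw [← mul_assoc, hcard, one_mul]
  have hle_νn : ∀ n (A : Set (ℕ → Λ)), ν A ≤ C * νn n A := by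
    intro n A
    have h1 : ((n : ℝ≥0∞) + 1) * ν A ≤ C * ∑ k ∈ Finset.range (n + 1), μk k A := by
      calc ((n : ℝ≥0∞) + 1) * ν A = ∑ _k ∈ Finset.range (n + 1), ν A := (hconst_sum n _).symm
        _ ≤ ∑ k ∈ Finset.range (n + 1), C * μk k A := Finset.sum_le_sum fun k _ => hle_μk k A
        _ = C * ∑ k ∈ Finset.range (n + 1), μk k A := by rw [Finset.mul_sum]
    calc ν A = ((n : ℝ≥0∞) + 1)⁻¹ * (((n : ℝ≥0∞) + 1) * ν A) := by
          rw [← mul_assoc, hcard, one_mul]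
      _ ≤ ((n : ℝ≥0∞) + 1)⁻¹ * (C * ∑ k ∈ Finset.range (n + 1), μk k A) :=
          mul_le_mul_right h1 _
      _ = C * νn n A := by rw [hνnapp]; ring
  have hνn_univ : ∀ n, νn n Set.univ = 1 := by
    intro n
    rw [hνnapp]
    have h1 : ∀ k, μk k Set.univ = 1 := fun k => (hμkprob k).measure_univ
    rw [Finset.sum_congr rfl fun k _ => h1 k, hconst_sum, mul_one, hcard]
  -- the ultrafilter limit
  set 𝒰 : Ultrafilter ℕ := Ultrafilter.of Filter.atTop with h𝒰def
  have h𝒰 : (𝒰 : Filter ℕ) ≤ Filter.atTop := Ultrafilter.of_le _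
  have hex : ∀ g : ℕ → ℝ≥0∞, ∃ a, Filter.Tendsto g 𝒰 (𝓝 a) := by
    intro g
    obtain ⟨a, -, ha⟩ := isCompact_univ.ultrafilter_le_nhds (𝒰.map g)
      (by simp [Filter.le_principal_iff])
    exact ⟨a, ha⟩
  set L : Set (ℕ → Λ) → ℝ≥0∞ := fun A => limUnder (𝒰 : Filter ℕ) (fun n => νn n A) with hLdef
  have hL : ∀ A, Filter.Tendsto (fun n => νn n A) 𝒰 (𝓝 (L A)) := fun A =>
    tendsto_nhds_limUnder (hex _)
  have hLle : ∀ A, L A ≤ C * ν A := fun A =>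
    le_of_tendsto (hL A) (Filter.Eventually.of_forall fun n => hνn_le n A)
  have hleL : ∀ A, ν A ≤ C * L A := fun A =>
    ge_of_tendsto (ENNReal.Tendsto.const_mul (hL A) (Or.inr hCne))
      (Filter.Eventually.of_forall fun n => hle_νn n A)
  have hLuniv : L Set.univ = 1 := by
    refine tendsto_nhds_unique (hL _) ?_
    simp only [hνn_univ]
    exact tendsto_const_nhds
  have hLempty : L ∅ = 0 := by
    refine tendsto_nhds_unique (hL _) ?_
    simp only [measure_empty]
    exact tendsto_const_nhds
  have hLmono : ∀ A B : Set (ℕ → Λ), A ⊆ B → L A ≤ L B := fun A B hAB =>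
    le_of_tendsto_of_tendsto' (hL A) (hL B) fun n => measure_mono hAB
  -- countable additivity of L
  have hLsigma : ∀ g : ℕ → Set (ℕ → Λ), (∀ i, MeasurableSet (g i)) →
      Pairwise (Function.onFun Disjoint g) → L (⋃ i, g i) = ∑' i, L (g i) := by
    intro g hgm hgd
    have hfin : ∀ N : ℕ,
        L (⋃ i ∈ Finset.range N, g i) = ∑ i ∈ Finset.range N, L (g i) := by
      intro N
      refine tendsto_nhds_unique (hL _) ?_
      have heq : (fun n => νn n (⋃ i ∈ Finset.range N, g i))
          = fun n => ∑ i ∈ Finset.range N, νn n (g i) :=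
        funext fun n => measure_biUnion_finset (hgd.set_pairwise _) fun i _ => hgm i
      rw [heq]
      exact tendsto_finset_sum _ fun i _ => hL (g i)
    have hlow : ∑' i, L (g i) ≤ L (⋃ i, g i) := by
      rw [ENNReal.tsum_eq_iSup_nat]
      refine iSup_le fun N => ?_
      rw [← hfin N]
      exact hLmono _ _ (Set.iUnion₂_subset fun i _ => Set.subset_iUnion g i)
    have hup : L (⋃ i, g i) ≤ ∑' i, L (g i) := by
      have hN : ∀ N : ℕ,
          L (⋃ i, g i) ≤ ∑ i ∈ Finset.range N, L (g i) + C * ν (⋃ i, g (i + N)) := by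
        intro N
        have hsplit : (⋃ i, g i) ⊆ (⋃ i ∈ Finset.range N, g i) ∪ ⋃ i, g (i + N) := by
          intro x hx
          obtain ⟨i, hi⟩ := Set.mem_iUnion.1 hx
          rcases lt_or_ge i N with h | h
          · exact Or.inl (Set.mem_biUnion (Finset.mem_range.2 h) hi)
          · exact Or.inr (Set.mem_iUnion.2 ⟨i - N, by rwa [Nat.sub_add_cancel h]⟩)
        calc L (⋃ i, g i) ≤ L ((⋃ i ∈ Finset.range N, g i) ∪ ⋃ i, g (i + N)) :=
              hLmono _ _ hsplit
          _ ≤ L (⋃ i ∈ Finset.range N, g i) + L (⋃ i, g (i + N)) :=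
              le_of_tendsto_of_tendsto' (hL _) ((hL _).add (hL _))
                fun n => measure_union_le _ _
          _ ≤ ∑ i ∈ Finset.range N, L (g i) + C * ν (⋃ i, g (i + N)) := by
              rw [hfin N]
              exact add_le_add le_rfl (hLle _)
      have htail : Filter.Tendsto
          (fun N => ∑ i ∈ Finset.range N, L (g i) + C * ν (⋃ i, g (i + N)))
          Filter.atTop (𝓝 (∑' i, L (g i) + C * 0)) := by
        refine Filter.Tendsto.add (ENNReal.tendsto_nat_tsum _) ?_
        refine ENNReal.Tendsto.const_mul ?_ (Or.inr hCne)
        have hb : ∀ N, ν (⋃ i, g (i + N)) ≤ ∑' i, ν (g (i + N)) := fun N =>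
          measure_iUnion_le _
        have hsum_ne : ∑' i, ν (g i) ≠ ⊤ := by
          rw [← measure_iUnion hgd hgm]
          exact measure_ne_top ν _
        have ht : Filter.Tendsto (fun N => ∑' i, ν (g (i + N))) Filter.atTop (𝓝 0) :=
          ENNReal.tendsto_sum_nat_add _ hsum_ne
        exact tendsto_of_tendsto_of_tendsto_of_le_of_le tendsto_const_nhds ht
          (fun N => zero_le) hb
      rw [mul_zero, add_zero] at htail
      exact ge_of_tendsto htail (Filter.Eventually.of_forall hN)
    exact le_antisymm hup hlow
  -- shift invariance of L
  have hμk_shift : ∀ k (A : Set (ℕ → Λ)), MeasurableSet A →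
      μk k (shift ⁻¹' A) = μk (k + 1) A := by
    intro k A hA
    rw [hμkapp k _ (measurable_shift hA), hμkapp (k + 1) _ hA, ← Set.preimage_comp,
      ← Function.iterate_succ']
  have hμ0 : ∀ A : Set (ℕ → Λ), μk 0 A = ν A := by
    intro A
    rw [hμkdef]
    simp [Measure.map_id]
  have hinv_nat : Filter.Tendsto (fun n : ℕ => ((n : ℝ≥0∞) + 1)⁻¹) Filter.atTop (𝓝 0) := by
    have h := ENNReal.tendsto_inv_nat_nhds_zero.comp (Filter.tendsto_add_atTop_nat 1)
    refine h.congr fun n => ?_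
    norm_cast
  have hLinv : ∀ A : Set (ℕ → Λ), MeasurableSet A → L (shift ⁻¹' A) = L A := by
    intro A hA
    have heq : ∀ n, νn n (shift ⁻¹' A) + ((n : ℝ≥0∞) + 1)⁻¹ * ν A
        = νn n A + ((n : ℝ≥0∞) + 1)⁻¹ * μk (n + 1) A := by
      intro n
      rw [hνnapp, hνnapp]
      have h1 : ∑ k ∈ Finset.range (n + 1), μk k (shift ⁻¹' A)
          = ∑ k ∈ Finset.range (n + 1), μk (k + 1) A :=
        Finset.sum_congr rfl fun k _ => hμk_shift k A hA
      rw [h1, ← mul_add, ← mul_add]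
      congr 1
      calc (∑ k ∈ Finset.range (n + 1), μk (k + 1) A) + ν A
          = (∑ k ∈ Finset.range (n + 1), μk (k + 1) A) + μk 0 A := by rw [hμ0]
        _ = ∑ k ∈ Finset.range (n + 2), μk k A := (Finset.sum_range_succ' (fun k => μk k A) (n + 1)).symm
        _ = (∑ k ∈ Finset.range (n + 1), μk k A) + μk (n + 1) A := Finset.sum_range_succ _ _
    have hlhs : Filter.Tendsto
        (fun n => νn n (shift ⁻¹' A) + ((n : ℝ≥0∞) + 1)⁻¹ * ν A) 𝒰
        (𝓝 (L (shift ⁻¹' A) + 0)) := by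
      refine (hL _).add ?_
      have h2 : Filter.Tendsto (fun n : ℕ => ((n : ℝ≥0∞) + 1)⁻¹ * ν A)
          Filter.atTop (𝓝 (0 * ν A)) :=
        ENNReal.Tendsto.mul_const hinv_nat (Or.inr (measure_ne_top ν A))
      rw [zero_mul] at h2
      exact h2.mono_left h𝒰
    have hrhs : Filter.Tendsto
        (fun n => νn n A + ((n : ℝ≥0∞) + 1)⁻¹ * μk (n + 1) A) 𝒰 (𝓝 (L A + 0)) := by
      refine (hL _).add ?_
      have hb : ∀ n : ℕ, ((n : ℝ≥0∞) + 1)⁻¹ * μk (n + 1) A ≤ ((n : ℝ≥0∞) + 1)⁻¹ * C := by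
        intro n
        refine mul_le_mul_right ?_ _
        calc μk (n + 1) A ≤ C * ν A := hμk_le _ _
          _ ≤ C * 1 := mul_le_mul_right prob_le_one _
          _ = C := mul_one C
      have hc : Filter.Tendsto (fun n : ℕ => ((n : ℝ≥0∞) + 1)⁻¹ * C)
          Filter.atTop (𝓝 (0 * C)) :=
        ENNReal.Tendsto.mul_const hinv_nat (Or.inr hCne)
      rw [zero_mul] at hc
      exact tendsto_of_tendsto_of_tendsto_of_le_of_le tendsto_const_nhds
        (hc.mono_left h𝒰) (fun n => zero_le) hb
    have := tendsto_nhds_unique (hlhs.congr fun n => heq n) hrhs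
    simpa using this
  -- the invariant measure
  set ν' : Measure (ℕ → Λ) := Measure.ofMeasurable (fun A _ => L A) hLempty
    (fun g hgm hgd => hLsigma g hgm hgd) with hν'def
  have hν'app : ∀ A : Set (ℕ → Λ), MeasurableSet A → ν' A = L A := fun A hA =>
    Measure.ofMeasurable_apply A hA
  haveI hν'prob : IsProbabilityMeasure ν' :=
    ⟨by rw [hν'app _ MeasurableSet.univ]; exact hLuniv⟩
  have hmp : MeasurePreserving shift ν' ν' := by
    refine ⟨measurable_shift, ?_⟩
    refine Measure.ext fun A hA => ?_
    rw [Measure.map_apply measurable_shift hA, hν'app _ (measurable_shift hA),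
      hν'app _ hA]
    exact hLinv A hA
  have hν'le : ∀ A : Set (ℕ → Λ), MeasurableSet A → ν' A ≤ C * ν A := fun A hA =>
    (hν'app A hA) ▸ hLle A
  have hleν' : ∀ A : Set (ℕ → Λ), MeasurableSet A → ν A ≤ C * ν' A := fun A hA =>
    (hν'app A hA) ▸ hleL A
  have hν'cyl_le : ∀ w : List Λ, ν' (cylinder w) ≤ C * ν (cylinder w) := fun w =>
    hν'le _ (measurableSet_cylinder w)
  have hcyl_leν' : ∀ w : List Λ, ν (cylinder w) ≤ C * ν' (cylinder w) := fun w =>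
    hleν' _ (measurableSet_cylinder w)
  -- quasi-Bernoulli property of ν'
  have hC4t : C ^ 4 < ⊤ := ENNReal.pow_lt_top hCt
  have hC41 : (1 : ℝ≥0∞) ≤ C ^ 4 := by
    calc (1 : ℝ≥0∞) = 1 ^ 4 := (one_pow 4).symm
      _ ≤ C ^ 4 := pow_le_pow_left₀ (zero_le) hC1 4
  have hQBν' : ∀ w v : List Λ,
      ν' (cylinder w) * ν' (cylinder v) ≤ C ^ 4 * ν' (cylinder (w ++ v)) ∧
      ν' (cylinder (w ++ v)) ≤ C ^ 4 * (ν' (cylinder w) * ν' (cylinder v)) := by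
    intro w v
    constructor
    · calc ν' (cylinder w) * ν' (cylinder v)
          ≤ (C * ν (cylinder w)) * (C * ν (cylinder v)) :=
            mul_le_mul' (hν'cyl_le w) (hν'cyl_le v)
        _ = C ^ 2 * (ν (cylinder w) * ν (cylinder v)) := by ring
        _ ≤ C ^ 2 * (C * ν (cylinder (w ++ v))) := mul_le_mul_right (hQB w v).1 _
        _ ≤ C ^ 2 * (C * (C * ν' (cylinder (w ++ v)))) :=
            mul_le_mul_right (mul_le_mul_right (hcyl_leν' _) _) _
        _ = C ^ 4 * ν' (cylinder (w ++ v)) := by ring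
    · calc ν' (cylinder (w ++ v)) ≤ C * ν (cylinder (w ++ v)) := hν'cyl_le _
        _ ≤ C * (C * (ν (cylinder w) * ν (cylinder v))) := mul_le_mul_right (hQB w v).2 _
        _ ≤ C * (C * ((C * ν' (cylinder w)) * (C * ν' (cylinder v)))) :=
            mul_le_mul_right (mul_le_mul_right
              (mul_le_mul' (hcyl_leν' w) (hcyl_leν' v)) _) _
        _ = C ^ 4 * (ν' (cylinder w) * ν' (cylinder v)) := by ring
  -- absolute continuity
  have hac1 : ν ≪ ν' := by
    refine Measure.AbsolutelyContinuous.mk fun s hs h0 => ?_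
    have := hleν' s hs
    rw [h0, mul_zero] at this
    exact le_antisymm this (zero_le)
  have hac2 : ν' ≪ ν := by
    refine Measure.AbsolutelyContinuous.mk fun s hs h0 => ?_
    have := hν'le s hs
    rw [h0, mul_zero] at this
    exact le_antisymm this (zero_le)
  -- ergodicity
  have hinv_iter : ∀ s : Set (ℕ → Λ), shift ⁻¹' s = s → ∀ n, (shift^[n]) ⁻¹' s = s := by
    intro s hs n
    induction n with
    | zero => rfl
    | succ n ih => rw [Function.iterate_succ, Set.preimage_comp, ih, hs]
  have herg : Ergodic shift ν' := by
    refine ⟨hmp, ⟨fun s hs hsinv => ?_⟩⟩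
    rw [Filter.eventuallyConst_set']
    have key : ν' s * ν' sᶜ = 0 := by
      set k : ℝ≥0∞ := 2 * C ^ 4 + 3 with hkdef
      have hkt : k ≠ ⊤ := by
        rw [hkdef]
        exact ENNReal.add_ne_top.2
          ⟨ENNReal.mul_ne_top (by norm_num) hC4t.ne, by norm_num⟩
      have hmain : ∀ ε : ℝ≥0∞, ε ≠ 0 → ε ≤ 1 → ν' s * ν' sᶜ ≤ k * ε := by
        intro ε hε hε1
        obtain ⟨U, hsU, hUo, hUlt⟩ := Set.exists_isOpen_lt_add s (measure_ne_top ν' s) hε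
        obtain ⟨V, hsV, hVo, hVlt⟩ :=
          Set.exists_isOpen_lt_add sᶜ (measure_ne_top ν' sᶜ) hε
        have happrox : ∀ W : Set (ℕ → Λ), IsOpen W →
            ∃ n, ν' W ≤ ν' (cylApprox W n) + ε := by
          intro W hW
          by_cases hWε : ν' W ≤ ε
          · exact ⟨0, hWε.trans (le_add_left le_rfl)⟩
          push_neg at hWε
          have hsup : ν' W = ⨆ n, ν' (cylApprox W n) := by
            conv_lhs => rw [← iUnion_cylApprox hW]
            exact (monotone_cylApprox W).directed_le.measure_iUnion
          have hlt : ν' W - ε < ⨆ n, ν' (cylApprox W n) := by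
            rw [← hsup]
            exact ENNReal.sub_lt_self (measure_ne_top _ _)
              ((lt_of_le_of_lt (zero_le : (0 : ℝ≥0∞) ≤ ε) hWε).ne') hε
          obtain ⟨n, hn⟩ := lt_iSup_iff.1 hlt
          exact ⟨n, tsub_le_iff_right.1 hn.le⟩
        obtain ⟨n, hnU⟩ := happrox U hUo
        obtain ⟨m, hmV⟩ := happrox V hVo
        set U₀ := cylApprox U n with hU₀def
        set V₀ := cylApprox V m with hV₀def
        have hprod : ν' U₀ * ν' V₀ ≤ C ^ 4 * ν' (U₀ ∩ (shift^[n]) ⁻¹' V₀) := by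
          have hrep : U₀ ∩ (shift^[n]) ⁻¹' V₀
              = ⋃ p : (Fin n → Λ) × (Fin m → Λ),
                  ⋃ (_ : cylinder (List.ofFn p.1) ⊆ U ∧ cylinder (List.ofFn p.2) ⊆ V),
                    cylinder (List.ofFn p.1 ++ List.ofFn p.2) := by
            ext x
            simp only [hU₀def, hV₀def, cylApprox, Set.mem_inter_iff, Set.mem_preimage,
              Set.mem_iUnion]
            constructor
            · rintro ⟨⟨f, hfU, hxf⟩, ⟨g, hgV, hxg⟩⟩
              refine ⟨(f, g), ⟨hfU, hgV⟩, ?_⟩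
              rw [cylinder_ofFn_append]
              exact ⟨hxf, hxg⟩
            · rintro ⟨⟨f, g⟩, ⟨hfU, hgV⟩, hx⟩
              rw [cylinder_ofFn_append] at hx
              exact ⟨⟨f, hfU, hx.1⟩, ⟨g, hgV, hx.2⟩⟩
          have hdisj : Pairwise (Function.onFun Disjoint fun p : (Fin n → Λ) × (Fin m → Λ) =>
              ⋃ (_ : cylinder (List.ofFn p.1) ⊆ U ∧ cylinder (List.ofFn p.2) ⊆ V),
                cylinder (List.ofFn p.1 ++ List.ofFn p.2)) := by
            rintro ⟨f, g⟩ ⟨f', g'⟩ hne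
            refine Disjoint.mono (Set.iUnion_subset fun _ => subset_rfl)
              (Set.iUnion_subset fun _ => subset_rfl) ?_
            by_cases hff : f = f'
            · subst hff
              have hgg : g ≠ g' := by
                rintro rfl
                exact hne rfl
              refine Disjoint.mono ?_ ?_
                ((disjoint_cylinder_ofFn hgg).preimage (shift^[n])) <;>
                · rw [cylinder_ofFn_append]; exact Set.inter_subset_right
            · refine Disjoint.mono ?_ ?_ (disjoint_cylinder_ofFn hff) <;>
                · rw [cylinder_ofFn_append]; exact Set.inter_subset_left
          have hmeas : ∀ p : (Fin n → Λ) × (Fin m → Λ), MeasurableSet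
              (⋃ (_ : cylinder (List.ofFn p.1) ⊆ U ∧ cylinder (List.ofFn p.2) ⊆ V),
                cylinder (List.ofFn p.1 ++ List.ofFn p.2)) := fun p =>
            .iUnion fun _ => measurableSet_cylinder _
          have hU₀sum : ν' U₀ = ∑' f : Fin n → Λ,
              ν' (⋃ (_ : cylinder (List.ofFn f) ⊆ U), cylinder (List.ofFn f)) :=
            measure_piUnion ν' n _
          have hV₀sum : ν' V₀ = ∑' g : Fin m → Λ,
              ν' (⋃ (_ : cylinder (List.ofFn g) ⊆ V), cylinder (List.ofFn g)) :=
            measure_piUnion ν' m _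
          calc ν' U₀ * ν' V₀
              = (∑' f : Fin n → Λ,
                    ν' (⋃ (_ : cylinder (List.ofFn f) ⊆ U), cylinder (List.ofFn f)))
                  * (∑' g : Fin m → Λ,
                    ν' (⋃ (_ : cylinder (List.ofFn g) ⊆ V), cylinder (List.ofFn g))) := by
                rw [hU₀sum, hV₀sum]
            _ = ∑' f : Fin n → Λ,
                  (ν' (⋃ (_ : cylinder (List.ofFn f) ⊆ U), cylinder (List.ofFn f))
                    * ∑' g : Fin m → Λ,
                      ν' (⋃ (_ : cylinder (List.ofFn g) ⊆ V), cylinder (List.ofFn g))) :=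
                ENNReal.tsum_mul_right.symm
            _ = ∑' f : Fin n → Λ, ∑' g : Fin m → Λ,
                  ν' (⋃ (_ : cylinder (List.ofFn f) ⊆ U), cylinder (List.ofFn f))
                    * ν' (⋃ (_ : cylinder (List.ofFn g) ⊆ V), cylinder (List.ofFn g)) :=
                tsum_congr fun f => ENNReal.tsum_mul_left.symm
            _ = ∑' p : (Fin n → Λ) × (Fin m → Λ),
                  ν' (⋃ (_ : cylinder (List.ofFn p.1) ⊆ U), cylinder (List.ofFn p.1))
                    * ν' (⋃ (_ : cylinder (List.ofFn p.2) ⊆ V), cylinder (List.ofFn p.2)) :=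
                ENNReal.tsum_prod.symm
            _ ≤ ∑' p : (Fin n → Λ) × (Fin m → Λ), C ^ 4 *
                  ν' (⋃ (_ : cylinder (List.ofFn p.1) ⊆ U ∧ cylinder (List.ofFn p.2) ⊆ V),
                    cylinder (List.ofFn p.1 ++ List.ofFn p.2)) := by
                refine ENNReal.tsum_le_tsum fun p => ?_
                by_cases hp : cylinder (List.ofFn p.1) ⊆ U ∧ cylinder (List.ofFn p.2) ⊆ V
                · have e1 : (⋃ (_ : cylinder (List.ofFn p.1) ⊆ U), cylinder (List.ofFn p.1))
                      = cylinder (List.ofFn p.1) := by simp [hp.1]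
                  have e2 : (⋃ (_ : cylinder (List.ofFn p.2) ⊆ V), cylinder (List.ofFn p.2))
                      = cylinder (List.ofFn p.2) := by simp [hp.2]
                  have e3 : (⋃ (_ : cylinder (List.ofFn p.1) ⊆ U ∧
                        cylinder (List.ofFn p.2) ⊆ V),
                        cylinder (List.ofFn p.1 ++ List.ofFn p.2))
                      = cylinder (List.ofFn p.1 ++ List.ofFn p.2) := by simp [hp]
                  rw [e1, e2, e3]
                  exact (hQBν' _ _).1
                · rcases not_and_or.1 hp with h | h
                  · have e1 : (⋃ (_ : cylinder (List.ofFn p.1) ⊆ U),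
                        cylinder (List.ofFn p.1)) = (∅ : Set (ℕ → Λ)) := by simp [h]
                    rw [e1]
                    simp
                  · have e2 : (⋃ (_ : cylinder (List.ofFn p.2) ⊆ V),
                        cylinder (List.ofFn p.2)) = (∅ : Set (ℕ → Λ)) := by simp [h]
                    rw [e2]
                    simp
            _ = C ^ 4 * ∑' p : (Fin n → Λ) × (Fin m → Λ),
                  ν' (⋃ (_ : cylinder (List.ofFn p.1) ⊆ U ∧ cylinder (List.ofFn p.2) ⊆ V),
                    cylinder (List.ofFn p.1 ++ List.ofFn p.2)) := ENNReal.tsum_mul_left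
            _ = C ^ 4 * ν' (U₀ ∩ (shift^[n]) ⁻¹' V₀) := by
                rw [← measure_iUnion hdisj hmeas, ← hrep]
        -- the intersection is small
        have hUs : ν' (U \ s) ≤ ε := by
          rw [measure_diff hsU hs.nullMeasurableSet (measure_ne_top _ _)]
          exact tsub_le_iff_left.2 hUlt.le
        have hVs : ν' (V \ sᶜ) ≤ ε := by
          rw [measure_diff hsV hs.compl.nullMeasurableSet (measure_ne_top _ _)]
          exact tsub_le_iff_left.2 hVlt.le
        have hinter : ν' (U₀ ∩ (shift^[n]) ⁻¹' V₀) ≤ 2 * ε := by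
          have hsub : U₀ ∩ (shift^[n]) ⁻¹' V₀ ⊆ (U \ s) ∪ (shift^[n]) ⁻¹' (V \ sᶜ) := by
            rintro x ⟨hxU, hxV⟩
            have hxU' : x ∈ U := cylApprox_subset U n hxU
            have hxV' : (shift^[n]) x ∈ V := cylApprox_subset V m hxV
            by_cases hxs : x ∈ s
            · right
              refine ⟨hxV', fun hc => ?_⟩
              have hx2 : x ∈ (shift^[n]) ⁻¹' s := by
                rw [hinv_iter s hsinv n]
                exact hxs
              exact hc hx2
            · exact Or.inl ⟨hxU', hxs⟩
          calc ν' (U₀ ∩ (shift^[n]) ⁻¹' V₀)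
              ≤ ν' (U \ s) + ν' ((shift^[n]) ⁻¹' (V \ sᶜ)) :=
                le_trans (measure_mono hsub) (measure_union_le _ _)
            _ = ν' (U \ s) + ν' (V \ sᶜ) := by
                rw [(hmp.iterate n).measure_preimage
                  ((hVo.measurableSet.diff hs.compl).nullMeasurableSet)]
            _ ≤ ε + ε := add_le_add hUs hVs
            _ = 2 * ε := (two_mul ε).symm
        have hUb : ν' s ≤ ν' U₀ + ε := le_trans (measure_mono hsU) hnU
        have hVb : ν' sᶜ ≤ ν' V₀ + ε := le_trans (measure_mono hsV) hmV
        calc ν' s * ν' sᶜ ≤ (ν' U₀ + ε) * (ν' V₀ + ε) := mul_le_mul' hUb hVb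
          _ = ν' U₀ * ν' V₀ + (ν' U₀ * ε + ε * ν' V₀ + ε * ε) := by ring
          _ ≤ C ^ 4 * (2 * ε) + (1 * ε + ε * 1 + ε * 1) := by
              refine add_le_add (le_trans hprod (mul_le_mul_right hinter _)) ?_
              refine add_le_add (add_le_add (mul_le_mul' prob_le_one le_rfl)
                (mul_le_mul' le_rfl prob_le_one)) (mul_le_mul' le_rfl hε1)
          _ = (2 * C ^ 4 + 3) * ε := by ring
      have hzero : ν' s * ν' sᶜ ≤ 0 := by
        refine ENNReal.le_of_forall_pos_le_add fun δ hδ _ => ?_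
        set ε : ℝ≥0∞ := min 1 ((δ : ℝ≥0∞) / k) with hεdef
        have hε0 : ε ≠ 0 := by
          refine (lt_min zero_lt_one (ENNReal.div_pos ?_ hkt)).ne'
          exact_mod_cast hδ.ne'
        calc ν' s * ν' sᶜ ≤ k * ε := hmain ε hε0 (min_le_left _ _)
          _ ≤ k * ((δ : ℝ≥0∞) / k) := mul_le_mul_right (min_le_right _ _) _
          _ ≤ δ := ENNReal.mul_div_le
          _ = 0 + δ := (zero_add _).symm
      exact le_antisymm hzero (zero_le)
    rcases mul_eq_zero.1 key with h | h
    · left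
      exact ae_eq_empty.2 h
    · right
      exact ae_eq_univ.2 h
  exact ⟨ν', hν'prob, herg, ⟨C ^ 4, hC41, hC4t, hQBν'⟩, hac1, hac2,
    ⟨C, hC1, hCt, fun w => ⟨hcyl_leν' w, hν'cyl_le w⟩⟩⟩
end

section
/- Let {φ_i}_{i∈Λ} be a self-similar IFS on ℝ^d with similarity ratios r_i ∈ (0,1) whose attractor F satisfies the strong separation condition, let p_i ∈ (0,1) with Σ p_i = 1, and let μ be the associated self-similar measure. Then dim_A(μ,x) = max_{i∈Λ} log p_i / log r_i = dim_A μ for μ-almost every x ∈ F. -/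
set_option linter.unusedSectionVars false
set_option linter.unusedVariables false
set_option maxHeartbeats 1000000

open MeasureTheory Metric Set
open scoped NNReal ENNReal

namespace SelfSimAux

variable {X : Type*} [MetricSpace X] {Λ : Type*}
variable {φ : Λ → X → X} {r : Λ → ℝ} {F : Set X}

/-- Composition of the maps along a word. -/
def ΦW (φ : Λ → X → X) : List Λ → X → X
  | [] => id
  | i :: w => φ i ∘ ΦW φ w

/-- Product of weights along a word. -/
def rW (r : Λ → ℝ) (w : List Λ) : ℝ := (w.map r).prod

@[simp] lemma ΦW_nil (φ : Λ → X → X) : ΦW φ [] = id := rfl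
@[simp] lemma ΦW_cons (φ : Λ → X → X) (i : Λ) (w : List Λ) :
    ΦW φ (i :: w) = φ i ∘ ΦW φ w := rfl

lemma ΦW_append (φ : Λ → X → X) (a b : List Λ) :
    ΦW φ (a ++ b) = ΦW φ a ∘ ΦW φ b := by
  induction a with
  | nil => simp
  | cons i t ih => simp [ΦW, ih, Function.comp_assoc]

@[simp] lemma rW_nil (r : Λ → ℝ) : rW r [] = 1 := by simp [rW]
@[simp] lemma rW_cons (r : Λ → ℝ) (i : Λ) (w : List Λ) :
    rW r (i :: w) = r i * rW r w := by simp [rW]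

lemma rW_append (r : Λ → ℝ) (a b : List Λ) :
    rW r (a ++ b) = rW r a * rW r b := by simp [rW]

lemma rW_pos {r : Λ → ℝ} (hr : ∀ i, 0 < r i) (w : List Λ) : 0 < rW r w := by
  induction w with
  | nil => simp
  | cons i t ih => simpa [rW] using mul_pos (hr i) ih

lemma rW_le_one {r : Λ → ℝ} (hr0 : ∀ i, 0 < r i) (hr1 : ∀ i, r i ≤ 1) (w : List Λ) :
    rW r w ≤ 1 := by
  induction w with
  | nil => simp
  | cons i t ih =>
    have := rW_pos hr0 t
    calc rW r (i :: t) = r i * rW r t := by simp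
    _ ≤ 1 * 1 := by
        apply mul_le_mul (hr1 i) ih (le_of_lt this) zero_le_one
    _ = 1 := by ring

lemma dist_ΦW {φ : Λ → X → X} {r : Λ → ℝ}
    (hsim : ∀ i, ∀ x y, dist (φ i x) (φ i y) = r i * dist x y)
    (w : List Λ) (x y : X) :
    dist (ΦW φ w x) (ΦW φ w y) = rW r w * dist x y := by
  induction w with
  | nil => simp
  | cons i t ih => simp [hsim, ih, mul_assoc]


lemma ΦW_image_subset (hsub : ∀ i, φ i '' F ⊆ F) (w : List Λ) :
    ΦW φ w '' F ⊆ F := by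
  induction w with
  | nil => simp [ΦW]
  | cons i t ih =>
    calc ΦW φ (i :: t) '' F = φ i '' (ΦW φ t '' F) := by
          rw [show ΦW φ (i :: t) = φ i ∘ ΦW φ t from rfl, Set.image_comp]
    _ ⊆ φ i '' F := Set.image_mono ih
    _ ⊆ F := hsub i

lemma exists_word (hcov : ∀ x ∈ F, ∃ i, x ∈ φ i '' F) :
    ∀ n, ∀ x ∈ F, ∃ w : List Λ, w.length = n ∧ x ∈ ΦW φ w '' F := by
  intro n
  induction n with
  | zero => intro x hx; exact ⟨[], rfl, by simp [ΦW, hx]⟩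
  | succ n ih =>
    intro x hx
    obtain ⟨i, y, hy, hyx⟩ := hcov x hx
    obtain ⟨w, hlen, z, hz, hzy⟩ := ih y hy
    exact ⟨i :: w, by simp [hlen], z, hz, by simp [ΦW, hzy, hyx]⟩

lemma exists_extend (hcov : ∀ x ∈ F, ∃ i, x ∈ φ i '' F) {x : X} {w : List Λ}
    (hx : x ∈ ΦW φ w '' F) : ∃ i, x ∈ ΦW φ (w ++ [i]) '' F := by
  obtain ⟨y, hy, hyx⟩ := hx
  obtain ⟨i, z, hz, hzy⟩ := hcov y hy
  refine ⟨i, z, hz, ?_⟩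
  simp only [ΦW_append, Function.comp_apply]
  rw [show ΦW φ [i] z = φ i z from rfl, hzy, hyx]

/-- A nested chain of cylinders containing `x`. -/
lemma exists_chain (hcov : ∀ x ∈ F, ∃ i, x ∈ φ i '' F) {x : X} (hx : x ∈ F) :
    ∃ ω : ℕ → List Λ, ω 0 = [] ∧ (∀ n, x ∈ ΦW φ (ω n) '' F) ∧
      ∀ n, ∃ i, ω (n + 1) = ω n ++ [i] := by
  have h0 : x ∈ ΦW φ ([] : List Λ) '' F := by simpa [ΦW] using hx
  let g : ℕ → {w : List Λ // x ∈ ΦW φ w '' F} := fun n =>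
    Nat.rec ⟨[], h0⟩
      (fun _ ih => ⟨ih.1 ++ [Classical.choose (exists_extend hcov ih.2)],
        Classical.choose_spec (exists_extend hcov ih.2)⟩) n
  exact ⟨fun n => (g n).1, rfl, fun n => (g n).2, fun n => ⟨_, rfl⟩⟩

/-- Separation constant for finitely many pairwise disjoint compacta. -/
lemma exists_delta [Fintype Λ] (hFc : IsCompact F)
    (hcont : ∀ i, Continuous (φ i))
    (hSSC : ∀ i j : Λ, i ≠ j → Disjoint (φ i '' F) (φ j '' F))
    (hFne : F.Nonempty) :
    ∃ δ : ℝ, 0 < δ ∧ ∀ i j : Λ, i ≠ j →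
      ∀ x ∈ φ i '' F, ∀ y ∈ φ j '' F, δ ≤ dist x y := by
  have key : ∀ q : Λ × Λ, q.1 ≠ q.2 → ∃ δ : ℝ, 0 < δ ∧
      ∀ x ∈ φ q.1 '' F, ∀ y ∈ φ q.2 '' F, δ ≤ dist x y := by
    rintro ⟨i, j⟩ hij
    have hA : IsCompact (φ i '' F) := hFc.image (hcont i)
    have hB : IsCompact (φ j '' F) := hFc.image (hcont j)
    have hAne : (φ i '' F).Nonempty := hFne.image _
    have hBne : (φ j '' F).Nonempty := hFne.image _
    have hcont' : ContinuousOn (fun x => infDist x (φ j '' F)) (φ i '' F) :=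
      (continuous_infDist_pt _).continuousOn
    obtain ⟨x₀, hx₀, hmin⟩ := hA.exists_isMinOn hAne hcont'
    have hpos : 0 < infDist x₀ (φ j '' F) := by
      rw [← hB.isClosed.notMem_iff_infDist_pos hBne]
      exact fun hmem => (hSSC i j hij).ne_of_mem hx₀ hmem rfl
    refine ⟨infDist x₀ (φ j '' F), hpos, fun x hx y hy => ?_⟩
    calc infDist x₀ (φ j '' F) ≤ infDist x (φ j '' F) := hmin hx
    _ ≤ dist x y := infDist_le_dist_of_mem hy
  by_cases h : ∃ q : Λ × Λ, q.1 ≠ q.2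
  · classical
    choose! δf hδf using key
    set s : Finset (Λ × Λ) := Finset.univ.filter (fun q => q.1 ≠ q.2) with hs
    have hsne : s.Nonempty := by
      obtain ⟨q, hq⟩ := h
      exact ⟨q, by simp [hs, hq]⟩
    refine ⟨s.inf' hsne δf, ?_, ?_⟩
    · rw [Finset.lt_inf'_iff]
      intro q hq
      exact (hδf q (by simpa [hs] using hq)).1
    · intro i j hij x hx y hy
      calc s.inf' hsne δf ≤ δf (i, j) := Finset.inf'_le _ (by simp [hs, hij])
      _ ≤ dist x y := (hδf (i, j) hij).2 x hx y hy
  · exact ⟨1, one_pos, fun i j hij => absurd ⟨(i, j), hij⟩ h⟩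


lemma gap_lemma (hsub : ∀ i, φ i '' F ⊆ F) (hcov : ∀ x ∈ F, ∃ i, x ∈ φ i '' F)
    (hsim : ∀ i, ∀ x y, dist (φ i x) (φ i y) = r i * dist x y)
    (hr0 : ∀ i, 0 < r i) (hr1 : ∀ i, r i ≤ 1)
    {δ : ℝ} (hδpos : 0 < δ)
    (hδ : ∀ i j : Λ, i ≠ j → ∀ x ∈ φ i '' F, ∀ y ∈ φ j '' F, δ ≤ dist x y)
    (w : List Λ) :
    ∀ x ∈ ΦW φ w '' F, ∀ y ∈ F, y ∉ ΦW φ w '' F → δ * rW r w ≤ dist x y := by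
  induction w with
  | nil => intro x hx y hy hy'; exact absurd (by simpa [ΦW] using hy) hy'
  | cons i t ih =>
    intro x hx y hy hy'
    have hx' : x ∈ φ i '' (ΦW φ t '' F) := by
      rwa [show ΦW φ (i :: t) = φ i ∘ ΦW φ t from rfl, Set.image_comp] at hx
    obtain ⟨x', hx'mem, hx'eq⟩ := hx'
    by_cases hyi : y ∈ φ i '' F
    · obtain ⟨y', hy'mem, hy'eq⟩ := hyi
      have hy'not : y' ∉ ΦW φ t '' F := by
        intro hmem
        apply hy'
        rw [show ΦW φ (i :: t) = φ i ∘ ΦW φ t from rfl, Set.image_comp]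
        exact ⟨y', hmem, hy'eq⟩
      have := ih x' hx'mem y' hy'mem hy'not
      have hdist : dist x y = r i * dist x' y' := by
        rw [← hx'eq, ← hy'eq]; exact hsim i x' y'
      rw [hdist, rW_cons]
      calc δ * (r i * rW r t) = r i * (δ * rW r t) := by ring
      _ ≤ r i * dist x' y' :=
            mul_le_mul_of_nonneg_left this (le_of_lt (hr0 i))
    · obtain ⟨j, hyj⟩ := hcov y hy
      have hij : i ≠ j := by
        rintro rfl; exact hyi hyj
      have hxi : x ∈ φ i '' F := ⟨x', ΦW_image_subset hsub t hx'mem, hx'eq⟩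
      have := hδ i j hij x hxi y hyj
      calc δ * rW r (i :: t) ≤ δ * 1 :=
            mul_le_mul_of_nonneg_left (rW_le_one hr0 hr1 _) (le_of_lt hδpos)
      _ = δ := mul_one δ
      _ ≤ dist x y := this

lemma ball_inter_subset_cyl (hsub : ∀ i, φ i '' F ⊆ F)
    (hcov : ∀ x ∈ F, ∃ i, x ∈ φ i '' F)
    (hsim : ∀ i, ∀ x y, dist (φ i x) (φ i y) = r i * dist x y)
    (hr0 : ∀ i, 0 < r i) (hr1 : ∀ i, r i ≤ 1)
    {δ : ℝ} (hδpos : 0 < δ)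
    (hδ : ∀ i j : Λ, i ≠ j → ∀ x ∈ φ i '' F, ∀ y ∈ φ j '' F, δ ≤ dist x y)
    {w : List Λ} {x : X} (hx : x ∈ ΦW φ w '' F) {ρ : ℝ} (hρ : ρ < δ * rW r w) :
    closedBall x ρ ∩ F ⊆ ΦW φ w '' F := by
  rintro y ⟨hyb, hyF⟩
  by_contra hy
  have := gap_lemma hsub hcov hsim hr0 hr1 hδpos hδ w x hx y hyF hy
  have hle : dist x y ≤ ρ := by
    rw [dist_comm]; exact mem_closedBall.mp hyb
  linarith

lemma cyl_subset_ball
    (hsim : ∀ i, ∀ x y, dist (φ i x) (φ i y) = r i * dist x y)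
    (hr0 : ∀ i, 0 < r i) (hFb : Bornology.IsBounded F)
    {w : List Λ} {x : X} (hx : x ∈ ΦW φ w '' F) :
    ΦW φ w '' F ⊆ closedBall x (diam F * rW r w) := by
  rintro y ⟨y', hy', rfl⟩
  obtain ⟨x', hx', rfl⟩ := hx
  rw [mem_closedBall, dist_ΦW hsim, mul_comm (diam F)]
  exact mul_le_mul_of_nonneg_left (dist_le_diam_of_mem hFb hy' hx')
    (le_of_lt (rW_pos hr0 w))

section Measure
variable [MeasurableSpace X] [BorelSpace X] [Fintype Λ]
variable {p : Λ → ℝ} {μ : Measure X}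

lemma measure_apply (hμ : μ = ∑ i, ENNReal.ofReal (p i) • μ.map (φ i))
    (hcont : ∀ i, Continuous (φ i)) {E : Set X} (hE : MeasurableSet E) :
    μ E = ∑ i, ENNReal.ofReal (p i) * μ (φ i ⁻¹' E) := by
  conv_lhs => rw [hμ]
  rw [Measure.finset_sum_apply]
  refine Finset.sum_congr rfl fun i _ => ?_
  rw [Measure.smul_apply, Measure.map_apply (hcont i).measurable hE, smul_eq_mul]

lemma measure_compl_zero [IsFiniteMeasure μ]
    (hμ : μ = ∑ i, ENNReal.ofReal (p i) • μ.map (φ i))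
    (hcont : ∀ i, Continuous (φ i))
    (hsim : ∀ i, ∀ x y, dist (φ i x) (φ i y) = r i * dist x y)
    (hr0 : ∀ i, 0 < r i)
    {ρ : ℝ} (hρ0 : 0 < ρ) (hρ1 : ρ < 1) (hρ : ∀ i, r i ≤ ρ)
    (hFc : IsCompact F) (hFne : F.Nonempty) (hFsub : ∀ i, φ i '' F ⊆ F)
    (hpsum1 : ∑ i, ENNReal.ofReal (p i) = 1) :
    μ Fᶜ = 0 := by
  set S : ℝ → Set X := fun t => {x | t ≤ infDist x F} with hS
  have hSclosed : ∀ t, IsClosed (S t) :=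
    fun t => isClosed_le continuous_const (continuous_infDist_pt F)
  have hSmeas : ∀ t, MeasurableSet (S t) := fun t => (hSclosed t).measurableSet
  have hSmono : ∀ {t t' : ℝ}, t ≤ t' → S t' ⊆ S t := by
    intro t t' h x hx; exact le_trans h hx
  -- one step
  have step : ∀ t : ℝ, μ (S t) ≤ μ (S (t / ρ)) := by
    intro t
    rw [measure_apply hμ hcont (hSmeas t)]
    have hsub : ∀ i, φ i ⁻¹' (S t) ⊆ S (t / ρ) := by
      intro i x hx
      obtain ⟨y₀, hy₀, hdy₀⟩ := hFc.exists_infDist_eq_dist hFne x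
      have h1 : infDist (φ i x) F ≤ r i * infDist x F := by
        calc infDist (φ i x) F ≤ dist (φ i x) (φ i y₀) := infDist_le_dist_of_mem (hFsub i ⟨y₀, hy₀, rfl⟩)
        _ = r i * dist x y₀ := hsim i x y₀
        _ = r i * infDist x F := by rw [hdy₀]
      have h2 : t ≤ ρ * infDist x F := by
        have : r i * infDist x F ≤ ρ * infDist x F :=
          mul_le_mul_of_nonneg_right (hρ i) infDist_nonneg
        exact le_trans (le_trans hx h1) this
      exact (div_le_iff₀' hρ0).mpr h2
    calc ∑ i, ENNReal.ofReal (p i) * μ (φ i ⁻¹' (S t))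
        ≤ ∑ i, ENNReal.ofReal (p i) * μ (S (t / ρ)) := by
          refine Finset.sum_le_sum fun i _ => ?_
          exact mul_le_mul_right (measure_mono (hsub i)) _
    _ = (∑ i, ENNReal.ofReal (p i)) * μ (S (t / ρ)) := by rw [Finset.sum_mul]
    _ = μ (S (t / ρ)) := by rw [hpsum1, one_mul]
  have iter : ∀ (k : ℕ) (t : ℝ), μ (S t) ≤ μ (S (t / ρ ^ k)) := by
    intro k
    induction k with
    | zero => intro t; simp
    | succ k ih =>
      intro t
      calc μ (S t) ≤ μ (S (t / ρ ^ k)) := ih t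
      _ ≤ μ (S (t / ρ ^ k / ρ)) := step _
      _ = μ (S (t / ρ ^ (k + 1))) := by rw [div_div, ← pow_succ]
  -- the tail goes to zero
  have hempty : ⋂ n : ℕ, S (n : ℝ) = ∅ := by
    ext x
    simp only [Set.mem_iInter, Set.mem_empty_iff_false, iff_false, not_forall]
    obtain ⟨n, hn⟩ := exists_nat_gt (infDist x F)
    exact ⟨n, fun h => absurd (lt_of_lt_of_le hn h) (lt_irrefl _)⟩
  have htend : Filter.Tendsto (fun n : ℕ => μ (S (n : ℝ))) Filter.atTop (nhds 0) := by
    have := tendsto_measure_iInter_atTop (μ := μ) (s := fun n : ℕ => S (n : ℝ))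
      (fun n => (hSmeas _).nullMeasurableSet)
      (fun a b hab => hSmono (by exact_mod_cast hab))
      ⟨0, measure_ne_top μ _⟩
    rwa [hempty, measure_empty] at this
  have hzero : ∀ t : ℝ, 0 < t → μ (S t) = 0 := by
    intro t ht
    have hle : ∀ n : ℕ, μ (S t) ≤ μ (S (n : ℝ)) := by
      intro n
      -- choose k with n ≤ t / ρ ^ k
      obtain ⟨k, hk⟩ : ∃ k : ℕ, ρ ^ k < t / (n + 1) := by
        exact exists_pow_lt_of_lt_one
          (show (0:ℝ) < t / ((n : ℝ) + 1) by positivity) hρ1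
      have hk' : (n : ℝ) ≤ t / ρ ^ k := by
        have hρk : (0:ℝ) < ρ ^ k := pow_pos hρ0 k
        rw [le_div_iff₀ hρk]
        calc (n : ℝ) * ρ ^ k ≤ (n + 1) * ρ ^ k := by
              apply mul_le_mul_of_nonneg_right (by linarith) (le_of_lt hρk)
        _ ≤ (n + 1) * (t / (n + 1)) := by
              apply mul_le_mul_of_nonneg_left (le_of_lt hk) (by positivity)
        _ = t := by field_simp
      calc μ (S t) ≤ μ (S (t / ρ ^ k)) := iter k t
      _ ≤ μ (S (n : ℝ)) := measure_mono (hSmono hk')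
    exact le_zero_iff.mp (ge_of_tendsto htend (Filter.Eventually.of_forall hle))
  -- conclude
  have hsubU : Fᶜ ⊆ ⋃ n : ℕ, S (1 / ((n : ℝ) + 1)) := by
    intro x hx
    have hpos : 0 < infDist x F :=
      (hFc.isClosed.notMem_iff_infDist_pos hFne).mp hx
    obtain ⟨n, hn⟩ := exists_nat_one_div_lt hpos
    exact Set.mem_iUnion.mpr ⟨n, le_of_lt hn⟩
  refine measure_mono_null hsubU (measure_iUnion_null fun n => hzero _ (by positivity))

end Measure

section Cyl
variable [MeasurableSpace X] [BorelSpace X] [Fintype Λ]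
variable {p : Λ → ℝ} {μ : Measure X}

lemma ΦW_continuous (hcont : ∀ i, Continuous (φ i)) (w : List Λ) :
    Continuous (ΦW φ w) := by
  induction w with
  | nil => exact continuous_id
  | cons i t ih => exact (hcont i).comp ih

lemma measure_image_eq (hμ : μ = ∑ i, ENNReal.ofReal (p i) • μ.map (φ i))
    (hcont : ∀ i, Continuous (φ i)) (hinj : ∀ i, Function.Injective (φ i))
    (hSSC : ∀ i j : Λ, i ≠ j → Disjoint (φ i '' F) (φ j '' F)) (hF0 : μ Fᶜ = 0)
    (i : Λ) {S : Set X} (hSc : IsCompact S) (hSF : S ⊆ F) :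
    μ (φ i '' S) = ENNReal.ofReal (p i) * μ S := by
  have hmeas : MeasurableSet (φ i '' S) := (hSc.image (hcont i)).isClosed.measurableSet
  rw [measure_apply hμ hcont hmeas]
  rw [Finset.sum_eq_single i]
  · rw [Set.preimage_image_eq S (hinj i)]
  · intro j _ hji
    have hzero : μ (φ j ⁻¹' (φ i '' S)) = 0 := by
      refine measure_mono_null ?_ hF0
      intro x hx
      simp only [Set.mem_compl_iff]
      intro hxF
      have h1 : φ j x ∈ φ j '' F := ⟨x, hxF, rfl⟩
      have h2 : φ j x ∈ φ i '' F := Set.image_mono hSF hx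
      exact (hSSC j i hji).ne_of_mem h1 h2 rfl
    rw [hzero, mul_zero]
  · intro h; exact absurd (Finset.mem_univ i) h

lemma measure_cyl (hμ : μ = ∑ i, ENNReal.ofReal (p i) • μ.map (φ i))
    (hcont : ∀ i, Continuous (φ i)) (hinj : ∀ i, Function.Injective (φ i))
    (hSSC : ∀ i j : Λ, i ≠ j → Disjoint (φ i '' F) (φ j '' F)) (hF0 : μ Fᶜ = 0)
    (hFsub : ∀ i, φ i '' F ⊆ F) (hp0 : ∀ i, 0 ≤ p i)
    (w : List Λ) {S : Set X} (hSc : IsCompact S) (hSF : S ⊆ F) :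
    μ (ΦW φ w '' S) = ENNReal.ofReal (rW p w) * μ S := by
  induction w with
  | nil => simp [ΦW]
  | cons i t ih =>
    have h1 : ΦW φ (i :: t) '' S = φ i '' (ΦW φ t '' S) := by
      rw [show ΦW φ (i :: t) = φ i ∘ ΦW φ t from rfl, Set.image_comp]
    have h2 : IsCompact (ΦW φ t '' S) := hSc.image (ΦW_continuous hcont t)
    have h3 : ΦW φ t '' S ⊆ F :=
      Set.Subset.trans (Set.image_mono hSF) (ΦW_image_subset hFsub t)
    rw [h1, measure_image_eq hμ hcont hinj hSSC hF0 i h2 h3, ih, rW_cons,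
      ENNReal.ofReal_mul (hp0 i), mul_assoc]

end Cyl

section Bad
variable [MeasurableSpace X] [BorelSpace X] [Fintype Λ]
variable {p : Λ → ℝ} {μ : Measure X}

lemma sum_words (hpsum : ∑ i, p i = 1) (n : ℕ) :
    ∑ v : Fin n → Λ, rW p (List.ofFn v) = 1 := by
  classical
  have h1 : ∀ v : Fin n → Λ, rW p (List.ofFn v) = ∏ k : Fin n, p (v k) := by
    intro v
    rw [rW, List.map_ofFn, List.prod_ofFn]
    rfl
  simp_rw [h1]
  have h2 := Finset.prod_univ_sum (κ := fun _ : Fin n => Λ)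
    (fun _ => Finset.univ) (fun _ j => p j)
  rw [Fintype.piFinset_univ] at h2
  rw [← h2]
  simp [hpsum]

lemma bad_null [IsProbabilityMeasure μ] (hμ : μ = ∑ i, ENNReal.ofReal (p i) • μ.map (φ i))
    (hcont : ∀ i, Continuous (φ i)) (hinj : ∀ i, Function.Injective (φ i))
    (hSSC : ∀ i j : Λ, i ≠ j → Disjoint (φ i '' F) (φ j '' F)) (hF0 : μ Fᶜ = 0)
    (hFsub : ∀ i, φ i '' F ⊆ F) (hcov : ∀ x ∈ F, ∃ i, x ∈ φ i '' F)
    (hFc : IsCompact F)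
    (hp0 : ∀ i, 0 < p i) (hpsum : ∑ i, p i = 1)
    (istar : Λ) (n : ℕ) :
    μ {x | x ∈ F ∧ ¬ ∃ w : List Λ, x ∈ ΦW φ (w ++ List.replicate n istar) '' F} = 0 := by
  classical
  set c : Fin n → Λ := fun _ => istar with hc
  set V : Finset (Fin n → Λ) := Finset.univ.erase c with hV
  set q : ℝ := ∑ v ∈ V, rW p (List.ofFn v) with hq
  have hq0 : 0 ≤ q := Finset.sum_nonneg fun v _ =>
    le_of_lt (rW_pos (fun i => hp0 i) _)
  have hq1 : q < 1 := by
    have h1 : q + rW p (List.ofFn c) = 1 := by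
      rw [hq, hV]
      rw [Finset.sum_erase_add _ _ (Finset.mem_univ c)]
      exact sum_words hpsum n
    have h2 : 0 < rW p (List.ofFn c) := rW_pos (fun i => hp0 i) _
    linarith
  -- the recursively defined bad sets
  set Bad : ℕ → Set X := fun m =>
    Nat.rec F (fun _ B => ⋃ v ∈ V, ΦW φ (List.ofFn v) '' B) m with hBad
  have hBad0 : Bad 0 = F := rfl
  have hBadS : ∀ m, Bad (m + 1) = ⋃ v ∈ V, ΦW φ (List.ofFn v) '' Bad m := fun m => rfl
  have hBadc : ∀ m, IsCompact (Bad m) ∧ Bad m ⊆ F := by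
    intro m
    induction m with
    | zero => exact ⟨hFc, Set.Subset.refl F⟩
    | succ m ih =>
      constructor
      · rw [hBadS]
        apply V.isCompact_biUnion
        intro v _
        exact ih.1.image (ΦW_continuous hcont _)
      · rw [hBadS]
        apply Set.iUnion₂_subset
        intro v _
        exact Set.Subset.trans (Set.image_mono ih.2) (ΦW_image_subset hFsub _)
  have hBadm : ∀ m, μ (Bad m) ≤ ENNReal.ofReal q ^ m := by
    intro m
    induction m with
    | zero => simpa using prob_le_one
    | succ m ih =>
      rw [hBadS]
      calc μ (⋃ v ∈ V, ΦW φ (List.ofFn v) '' Bad m)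
          ≤ ∑ v ∈ V, μ (ΦW φ (List.ofFn v) '' Bad m) := measure_biUnion_finset_le V _
      _ = ∑ v ∈ V, ENNReal.ofReal (rW p (List.ofFn v)) * μ (Bad m) := by
          refine Finset.sum_congr rfl fun v _ => ?_
          exact measure_cyl hμ hcont hinj hSSC hF0 hFsub
            (fun i => le_of_lt (hp0 i)) _ (hBadc m).1 (hBadc m).2
      _ = ENNReal.ofReal q * μ (Bad m) := by
          rw [← Finset.sum_mul, hq, ENNReal.ofReal_sum_of_nonneg]
          intro v _; exact le_of_lt (rW_pos (fun i => hp0 i) _)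
      _ ≤ ENNReal.ofReal q * ENNReal.ofReal q ^ m := mul_le_mul_right ih _
      _ = ENNReal.ofReal q ^ (m + 1) := by ring
  -- the set in question is contained in every Bad m
  set B : Set X :=
    {x | x ∈ F ∧ ¬ ∃ w : List Λ, x ∈ ΦW φ (w ++ List.replicate n istar) '' F} with hB
  have hBsub : ∀ m, B ⊆ Bad m := by
    intro m
    induction m with
    | zero => exact fun x hx => hx.1
    | succ m ih =>
      rintro x ⟨hxF, hxw⟩
      obtain ⟨w, hwlen, hxcyl⟩ := exists_word hcov n x hxF
      set v : Fin n → Λ := fun k => w.get (Fin.cast hwlen.symm k) with hv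
      have hofn : List.ofFn v = w := by
        apply List.ext_getElem
        · simp [hwlen]
        · intro k h1 h2
          simp [hv]
      have hvV : v ∈ V := by
        rw [hV, Finset.mem_erase]
        refine ⟨?_, Finset.mem_univ v⟩
        intro hvc
        apply hxw
        refine ⟨[], ?_⟩
        have hw : w = List.replicate n istar := by
          rw [← hofn, hvc, hc]
          exact List.ofFn_const n istar
        rw [List.nil_append, ← hw]
        exact hxcyl
      obtain ⟨y, hy, hyx⟩ := hxcyl
      have hyB : y ∈ B := by
        refine ⟨hy, ?_⟩
        rintro ⟨w', hw'⟩
        apply hxw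
        refine ⟨w ++ w', ?_⟩
        rw [List.append_assoc, ΦW_append, Set.image_comp]
        exact ⟨y, hw', hyx⟩
      rw [hBadS]
      refine Set.mem_biUnion hvV ?_
      rw [hofn]
      exact ⟨y, ih hyB, hyx⟩
  -- conclude
  have htend : Filter.Tendsto (fun m : ℕ => ENNReal.ofReal q ^ m)
      Filter.atTop (nhds 0) :=
    ENNReal.tendsto_pow_atTop_nhds_zero_of_lt_one (by
      rw [← ENNReal.ofReal_one]
      exact (ENNReal.ofReal_lt_ofReal_iff one_pos).mpr hq1)
  have : μ B ≤ 0 :=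
    ge_of_tendsto htend (Filter.Eventually.of_forall fun m =>
      le_trans (measure_mono (hBsub m)) (hBadm m))
  exact le_zero_iff.mp this

end Bad

section Main
variable [MeasurableSpace X] [BorelSpace X] [Fintype Λ]
variable {p : Λ → ℝ} {μ : Measure X}

lemma rpow_le_rW {sstar : ℝ} (hr0 : ∀ i, 0 < r i) {p : Λ → ℝ} (hp0 : ∀ i, 0 < p i)
    (hps : ∀ i, r i ^ sstar ≤ p i) (w : List Λ) :
    rW r w ^ sstar ≤ rW p w := by
  induction w with
  | nil => simp [Real.one_rpow]
  | cons i t ih =>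
    rw [rW_cons, rW_cons, Real.mul_rpow (le_of_lt (hr0 i)) (le_of_lt (rW_pos hr0 t))]
    exact mul_le_mul (hps i) ih (Real.rpow_nonneg (le_of_lt (rW_pos hr0 t)) _)
      (le_of_lt (hp0 i))

lemma chain_prefix {ω : ℕ → List Λ} (hω : ∀ n, ∃ i, ω (n + 1) = ω n ++ [i]) :
    ∀ a b : ℕ, a ≤ b → ∃ u, ω b = ω a ++ u := by
  intro a b hab
  induction b, hab using Nat.le_induction with
  | base => exact ⟨[], by simp⟩
  | succ b hab ih =>
    obtain ⟨u, hu⟩ := ih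
    obtain ⟨i, hi⟩ := hω b
    exact ⟨u ++ [i], by rw [hi, hu, List.append_assoc]⟩

lemma upper_bound [IsProbabilityMeasure μ]
    (hμ : μ = ∑ i, ENNReal.ofReal (p i) • μ.map (φ i))
    (hcont : ∀ i, Continuous (φ i)) (hinj : ∀ i, Function.Injective (φ i))
    (hSSC : ∀ i j : Λ, i ≠ j → Disjoint (φ i '' F) (φ j '' F)) (hF0 : μ Fᶜ = 0)
    (hFsub : ∀ i, φ i '' F ⊆ F) (hcov : ∀ x ∈ F, ∃ i, x ∈ φ i '' F)
    (hFc : IsCompact F) (hFne : F.Nonempty)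
    (hsim : ∀ i, ∀ x y, dist (φ i x) (φ i y) = r i * dist x y)
    (hr0 : ∀ i, 0 < r i) (hr1 : ∀ i, r i ≤ 1)
    {ρ₀ : ℝ} (hρ₀0 : 0 < ρ₀) (hρ₀ : ∀ i, ρ₀ ≤ r i) (hρ₀1 : ρ₀ ≤ 1)
    {ρ : ℝ} (hρ0 : 0 < ρ) (hρ1 : ρ < 1) (hρ : ∀ i, r i ≤ ρ)
    {δ : ℝ} (hδpos : 0 < δ)
    (hδ : ∀ i j : Λ, i ≠ j → ∀ x ∈ φ i '' F, ∀ y ∈ φ j '' F, δ ≤ dist x y)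
    (hD0 : 0 < diam F)
    {sstar : ℝ} (hs0 : 0 < sstar)
    (hp0 : ∀ i, 0 < p i) (hp1 : ∀ i, p i ≤ 1) (hps : ∀ i, r i ^ sstar ≤ p i) :
    ∃ C : ℝ, 0 < C ∧ ∀ x ∈ F, ∀ r1 R1 : ℝ, 0 < r1 → r1 < R1 →
      μ (closedBall x R1) ≤ ENNReal.ofReal (C * (R1 / r1) ^ sstar) * μ (closedBall x r1) := by
  classical
  set D := diam F with hD
  set c := δ / 2 with hc
  have hc0 : 0 < c := by positivity
  set A : ℝ := (D / (c * ρ₀ * ρ₀)) ^ sstar with hA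
  have hA0 : 0 < A := Real.rpow_pos_of_pos (by positivity) _
  refine ⟨max 1 A, lt_of_lt_of_le one_pos (le_max_left _ _), ?_⟩
  set C := max 1 A with hCdef
  have hC1 : (1:ℝ) ≤ C := le_max_left _ _
  have hCA : A ≤ C := le_max_right _ _
  intro x hx r1 R1 hr1pos hrR
  have hR1pos : 0 < R1 := lt_trans hr1pos hrR
  have hRrpow : 1 ≤ (R1 / r1) ^ sstar :=
    Real.one_le_rpow (by rw [le_div_iff₀ hr1pos]; linarith) (le_of_lt hs0)
  have hfac1 : (1:ℝ≥0∞) ≤ ENNReal.ofReal (C * (R1 / r1) ^ sstar) := by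
    rw [← ENNReal.ofReal_one]
    apply ENNReal.ofReal_le_ofReal
    calc (1:ℝ) = 1 * 1 := by ring
    _ ≤ C * (R1 / r1) ^ sstar := mul_le_mul hC1 hRrpow zero_le_one (by linarith)
  have hF1 : μ F = 1 := by
    have h := measure_add_measure_compl (μ := μ) hFc.isClosed.measurableSet
    rw [hF0, add_zero, measure_univ] at h
    exact h
  by_cases hcaseA : D ≤ r1
  · -- trivial case: the small ball already contains F
    have hFsubB : F ⊆ closedBall x r1 := fun y hy =>
      mem_closedBall.mpr (le_trans (dist_le_diam_of_mem hFc.isBounded hy hx) hcaseA)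
    have h1 : (1:ℝ≥0∞) ≤ μ (closedBall x r1) := by
      rw [← hF1]; exact measure_mono hFsubB
    calc μ (closedBall x R1) ≤ 1 := prob_le_one
    _ = 1 * 1 := by ring
    _ ≤ ENNReal.ofReal (C * (R1 / r1) ^ sstar) * μ (closedBall x r1) :=
        mul_le_mul' hfac1 h1
  · push_neg at hcaseA
    obtain ⟨ω, hω0, hωmem, hωstep⟩ := exists_chain hcov hx
    have hrWpos : ∀ n, 0 < rW r (ω n) := fun n => rW_pos hr0 _
    have hrWstep : ∀ n, ρ₀ * rW r (ω n) ≤ rW r (ω (n + 1)) ∧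
        rW r (ω (n + 1)) ≤ ρ * rW r (ω n) := by
      intro n
      obtain ⟨i, hi⟩ := hωstep n
      rw [hi, rW_append]
      have h1 : ρ₀ ≤ rW r [i] := by simpa [rW] using hρ₀ i
      have h2 : rW r [i] ≤ ρ := by simpa [rW] using hρ i
      constructor
      · calc ρ₀ * rW r (ω n) = rW r (ω n) * ρ₀ := by ring
        _ ≤ rW r (ω n) * rW r [i] :=
            mul_le_mul_of_nonneg_left h1 (le_of_lt (hrWpos n))
      · calc rW r (ω n) * rW r [i] ≤ rW r (ω n) * ρ :=
            mul_le_mul_of_nonneg_left h2 (le_of_lt (hrWpos n))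
        _ = ρ * rW r (ω n) := by ring
    have hrWpow : ∀ n, rW r (ω n) ≤ ρ ^ n := by
      intro n
      induction n with
      | zero => simp [hω0]
      | succ n ih =>
        calc rW r (ω (n + 1)) ≤ ρ * rW r (ω n) := (hrWstep n).2
        _ ≤ ρ * ρ ^ n := mul_le_mul_of_nonneg_left ih (le_of_lt hρ0)
        _ = ρ ^ (n + 1) := by ring
    -- measure of a cylinder
    have hcylmeas : ∀ n, μ (ΦW φ (ω n) '' F) = ENNReal.ofReal (rW p (ω n)) := by
      intro n
      rw [measure_cyl hμ hcont hinj hSSC hF0 hFsub (fun i => le_of_lt (hp0 i)) _ hFc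
        (Set.Subset.refl F), hF1, mul_one]
    -- upper estimate for the big ball
    have hup : ∃ a : ℕ, μ (closedBall x R1) ≤ ENNReal.ofReal (rW p (ω a)) ∧
        c * ρ₀ * rW r (ω a) ≤ R1 := by
      have hexN : ∃ k, c * rW r (ω k) < R1 := by
        obtain ⟨k, hk⟩ := exists_pow_lt_of_lt_one (show (0:ℝ) < R1 / c by positivity) hρ1
        refine ⟨k, ?_⟩
        calc c * rW r (ω k) ≤ c * ρ ^ k := mul_le_mul_of_nonneg_left (hrWpow k) (le_of_lt hc0)
        _ < c * (R1 / c) := mul_lt_mul_of_pos_left hk hc0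
        _ = R1 := by field_simp
      set N := Nat.find hexN with hN
      rcases Nat.eq_zero_or_pos N with hN0 | hNpos
      · refine ⟨0, ?_, ?_⟩
        · rw [hω0]; simpa [rW] using prob_le_one
        · have := Nat.find_spec hexN
          rw [← hN, hN0, hω0] at this
          simp only [rW_nil, mul_one] at this
          rw [hω0]; simp only [rW_nil, mul_one]
          nlinarith
      · set a := N - 1 with ha
        have haN : a + 1 = N := Nat.succ_pred_eq_of_pos hNpos
        have hnot : ¬ (c * rW r (ω a) < R1) := Nat.find_min hexN (by omega)
        push_neg at hnot
        refine ⟨a, ?_, ?_⟩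
        · have hball : closedBall x R1 ∩ F ⊆ ΦW φ (ω a) '' F := by
            apply ball_inter_subset_cyl hFsub hcov hsim hr0 hr1 hδpos hδ (hωmem a)
            calc R1 ≤ c * rW r (ω a) := hnot
            _ < δ * rW r (ω a) := by
                apply mul_lt_mul_of_pos_right _ (hrWpos a)
                rw [hc]; linarith
          calc μ (closedBall x R1) ≤ μ (ΦW φ (ω a) '' F ∪ Fᶜ) := by
                apply measure_mono
                intro y hy
                by_cases hyF : y ∈ F
                · exact Or.inl (hball ⟨hy, hyF⟩)
                · exact Or.inr hyF
          _ ≤ μ (ΦW φ (ω a) '' F) + μ Fᶜ := measure_union_le _ _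
          _ = ENNReal.ofReal (rW p (ω a)) := by rw [hF0, add_zero, hcylmeas]
        · have hspec := Nat.find_spec hexN
          rw [← hN, ← haN] at hspec
          calc c * ρ₀ * rW r (ω a) = c * (ρ₀ * rW r (ω a)) := by ring
          _ ≤ c * rW r (ω (a + 1)) :=
              mul_le_mul_of_nonneg_left (hrWstep a).1 (le_of_lt hc0)
          _ ≤ R1 := le_of_lt hspec
    -- lower estimate for the small ball
    have hlow : ∃ b : ℕ, ENNReal.ofReal (rW p (ω b)) ≤ μ (closedBall x r1) ∧
        ρ₀ * r1 ≤ D * rW r (ω b) := by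
      have hexM : ∃ k, D * rW r (ω k) ≤ r1 := by
        obtain ⟨k, hk⟩ := exists_pow_lt_of_lt_one (show (0:ℝ) < r1 / D by positivity) hρ1
        refine ⟨k, le_of_lt ?_⟩
        calc D * rW r (ω k) ≤ D * ρ ^ k := mul_le_mul_of_nonneg_left (hrWpow k) (le_of_lt hD0)
        _ < D * (r1 / D) := mul_lt_mul_of_pos_left hk hD0
        _ = r1 := by field_simp
      set M := Nat.find hexM with hM
      have hMpos : 0 < M := by
        rcases Nat.eq_zero_or_pos M with h0 | h; swap; exact h
        exfalso
        have := Nat.find_spec hexM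
        rw [← hM, h0, hω0] at this
        simp only [rW_nil, mul_one] at this
        linarith
      have hb := Nat.succ_pred_eq_of_pos hMpos
      have hnot : ¬ (D * rW r (ω (M - 1)) ≤ r1) := Nat.find_min hexM (by omega)
      push_neg at hnot
      have hspec := Nat.find_spec hexM
      rw [← hM] at hspec
      refine ⟨M, ?_, ?_⟩
      · have hsubB : ΦW φ (ω M) '' F ⊆ closedBall x r1 := by
          apply Set.Subset.trans (cyl_subset_ball hsim hr0 hFc.isBounded (hωmem M))
          exact closedBall_subset_closedBall hspec
        rw [← hcylmeas M]
        exact measure_mono hsubB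
      · calc ρ₀ * r1 ≤ ρ₀ * (D * rW r (ω (M - 1))) :=
            mul_le_mul_of_nonneg_left (le_of_lt hnot) (le_of_lt hρ₀0)
        _ = D * (ρ₀ * rW r (ω (M - 1))) := by ring
        _ ≤ D * rW r (ω (M - 1 + 1)) :=
            mul_le_mul_of_nonneg_left (hrWstep (M - 1)).1 (le_of_lt hD0)
        _ = D * rW r (ω M) := by rw [show M - 1 + 1 = M by omega]
    obtain ⟨a, hupμ, hupr⟩ := hup
    obtain ⟨b, hlowμ, hlowr⟩ := hlow
    -- combine
    have key : rW p (ω a) ≤ C * (R1 / r1) ^ sstar * rW p (ω b) := by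
      rcases le_or_gt a b with hab | hab
      · obtain ⟨u, hu⟩ := chain_prefix hωstep a b hab
        have hrWu : rW r (ω b) = rW r (ω a) * rW r u := by rw [hu, rW_append]
        have hpWu : rW p (ω b) = rW p (ω a) * rW p u := by rw [hu, rW_append]
        have hupos : 0 < rW r u := rW_pos hr0 u
        have hupp : 0 < rW p u := rW_pos hp0 u
        -- lower bound for rW r u
        have hkey : c * ρ₀ * ρ₀ * r1 ≤ rW r u * (D * R1) := by
          calc c * ρ₀ * ρ₀ * r1 = c * ρ₀ * (ρ₀ * r1) := by ring
          _ ≤ c * ρ₀ * (D * (rW r (ω a) * rW r u)) := by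
              apply mul_le_mul_of_nonneg_left _ (by positivity)
              rw [← hrWu]; exact hlowr
          _ = D * rW r u * (c * ρ₀ * rW r (ω a)) := by ring
          _ ≤ D * rW r u * R1 := by
              apply mul_le_mul_of_nonneg_left hupr (by positivity)
          _ = rW r u * (D * R1) := by ring
        have hru : c * ρ₀ * ρ₀ / D * (r1 / R1) ≤ rW r u := by
          rw [div_mul_div_comm, div_le_iff₀ (by positivity : (0:ℝ) < D * R1)]
          exact hkey
        have hrupow : (c * ρ₀ * ρ₀ / D) ^ sstar * (r1 / R1) ^ sstar ≤ rW p u := by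
          calc (c * ρ₀ * ρ₀ / D) ^ sstar * (r1 / R1) ^ sstar
              = (c * ρ₀ * ρ₀ / D * (r1 / R1)) ^ sstar := by
                rw [Real.mul_rpow (by positivity) (by positivity)]
          _ ≤ rW r u ^ sstar := Real.rpow_le_rpow (by positivity) hru (le_of_lt hs0)
          _ ≤ rW p u := rpow_le_rW hr0 hp0 hps u
        have hAmul : A * (c * ρ₀ * ρ₀ / D) ^ sstar = 1 := by
          rw [hA, ← Real.mul_rpow (by positivity) (by positivity)]
          rw [show D / (c * ρ₀ * ρ₀) * (c * ρ₀ * ρ₀ / D) = 1 by field_simp]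
          exact Real.one_rpow _
        have hBmul : (R1 / r1) ^ sstar * (r1 / R1) ^ sstar = 1 := by
          rw [← Real.mul_rpow (by positivity) (by positivity)]
          rw [show R1 / r1 * (r1 / R1) = 1 by field_simp]
          exact Real.one_rpow _
        have hone : 1 ≤ C * (R1 / r1) ^ sstar * rW p u := by
          have h1 : A * (R1 / r1) ^ sstar * ((c * ρ₀ * ρ₀ / D) ^ sstar * (r1 / R1) ^ sstar)
              = 1 := by
            calc A * (R1 / r1) ^ sstar * ((c * ρ₀ * ρ₀ / D) ^ sstar * (r1 / R1) ^ sstar)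
                = (A * (c * ρ₀ * ρ₀ / D) ^ sstar) * ((R1 / r1) ^ sstar * (r1 / R1) ^ sstar) := by
                  ring
            _ = 1 := by rw [hAmul, hBmul, one_mul]
          calc (1:ℝ) = A * (R1 / r1) ^ sstar *
                ((c * ρ₀ * ρ₀ / D) ^ sstar * (r1 / R1) ^ sstar) := h1.symm
          _ ≤ C * (R1 / r1) ^ sstar * rW p u :=
              mul_le_mul (mul_le_mul_of_nonneg_right hCA (by positivity)) hrupow
                (by positivity) (by positivity)
        calc rW p (ω a) = rW p (ω a) * 1 := by ring
        _ ≤ rW p (ω a) * (C * (R1 / r1) ^ sstar * rW p u) :=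
            mul_le_mul_of_nonneg_left hone (le_of_lt (rW_pos hp0 _))
        _ = C * (R1 / r1) ^ sstar * rW p (ω b) := by rw [hpWu]; ring
      · obtain ⟨u, hu⟩ := chain_prefix hωstep b a (le_of_lt hab)
        have hpWu : rW p (ω a) = rW p (ω b) * rW p u := by rw [hu, rW_append]
        calc rW p (ω a) = rW p (ω b) * rW p u := hpWu
        _ ≤ rW p (ω b) * 1 :=
            mul_le_mul_of_nonneg_left (rW_le_one hp0 hp1 u) (le_of_lt (rW_pos hp0 _))
        _ = 1 * rW p (ω b) := by ring
        _ ≤ C * (R1 / r1) ^ sstar * rW p (ω b) := by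
            have h1C : (1:ℝ) ≤ C * (R1 / r1) ^ sstar := by
              calc (1:ℝ) = 1 * 1 := by ring
              _ ≤ C * (R1 / r1) ^ sstar := mul_le_mul hC1 hRrpow zero_le_one (by linarith)
            exact mul_le_mul_of_nonneg_right h1C (le_of_lt (rW_pos hp0 _))
    calc μ (closedBall x R1) ≤ ENNReal.ofReal (rW p (ω a)) := hupμ
    _ ≤ ENNReal.ofReal (C * (R1 / r1) ^ sstar * rW p (ω b)) :=
        ENNReal.ofReal_le_ofReal key
    _ = ENNReal.ofReal (C * (R1 / r1) ^ sstar) * ENNReal.ofReal (rW p (ω b)) :=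
        ENNReal.ofReal_mul (by positivity)
    _ ≤ ENNReal.ofReal (C * (R1 / r1) ^ sstar) * μ (closedBall x r1) :=
        mul_le_mul_right hlowμ _

lemma rW_replicate (r : Λ → ℝ) (m : ℕ) (i : Λ) :
    rW r (List.replicate m i) = r i ^ m := by
  rw [rW, List.map_replicate, List.prod_replicate]

lemma lower_bound [IsProbabilityMeasure μ]
    (hμ : μ = ∑ i, ENNReal.ofReal (p i) • μ.map (φ i))
    (hcont : ∀ i, Continuous (φ i)) (hinj : ∀ i, Function.Injective (φ i))
    (hSSC : ∀ i j : Λ, i ≠ j → Disjoint (φ i '' F) (φ j '' F)) (hF0 : μ Fᶜ = 0)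
    (hFsub : ∀ i, φ i '' F ⊆ F) (hcov : ∀ x ∈ F, ∃ i, x ∈ φ i '' F)
    (hFc : IsCompact F) (hFne : F.Nonempty)
    (hsim : ∀ i, ∀ x y, dist (φ i x) (φ i y) = r i * dist x y)
    (hr0 : ∀ i, 0 < r i) (hr1 : ∀ i, r i < 1)
    {δ : ℝ} (hδpos : 0 < δ)
    (hδ : ∀ i j : Λ, i ≠ j → ∀ x ∈ φ i '' F, ∀ y ∈ φ j '' F, δ ≤ dist x y)
    (hD0 : 0 < diam F) (hδD : δ ≤ diam F)
    (hp0 : ∀ i, 0 < p i)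
    (istar : Λ) {sstar : ℝ} (hs0 : 0 < sstar)
    (hstar : p istar = r istar ^ sstar)
    {x : X} (hxF : x ∈ F)
    (hgood : ∀ n : ℕ, ∃ w : List Λ, x ∈ ΦW φ (w ++ List.replicate n istar) '' F)
    {s C : ℝ} (hss : s < sstar) (hC : 0 < C) :
    ∃ r1 R1 : ℝ, 0 < r1 ∧ r1 < R1 ∧
      ¬ (μ (closedBall x R1) ≤ ENNReal.ofReal (C * (R1 / r1) ^ s) *
          μ (closedBall x r1)) := by
  classical
  set D := diam F with hD
  set c := δ / 2 with hc
  have hc0 : 0 < c := by positivity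
  have hcD : c < D := by rw [hc]; linarith
  set q := r istar with hqdef
  have hq0 : 0 < q := hr0 istar
  have hq1 : q < 1 := hr1 istar
  -- choose the length m of the run
  have hbase1 : q ^ (sstar - s) < 1 :=
    Real.rpow_lt_one (le_of_lt hq0) hq1 (by linarith)
  have hbase0 : 0 < q ^ (sstar - s) := Real.rpow_pos_of_pos hq0 _
  have hDc0 : (0:ℝ) < (D / c) ^ s := Real.rpow_pos_of_pos (by positivity) _
  obtain ⟨m, hm⟩ := exists_pow_lt_of_lt_one
    (show (0:ℝ) < 1 / (C * (D / c) ^ s) by positivity) hbase1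
  have hmkey : C * (D / c) ^ s * (q ^ (sstar - s)) ^ m < 1 := by
    rw [div_eq_mul_inv, one_mul] at hm
    have h2 : C * (D / c) ^ s * (q ^ (sstar - s)) ^ m
        < C * (D / c) ^ s * (C * (D / c) ^ s)⁻¹ :=
      mul_lt_mul_of_pos_left hm (by positivity)
    rwa [mul_inv_cancel₀ (by positivity)] at h2
  obtain ⟨w, hw⟩ := hgood m
  set w' := w ++ List.replicate m istar with hw'def
  have hrw' : rW r w' = rW r w * q ^ m := by
    rw [hw'def, rW_append, rW_replicate]
  have hpw' : rW p w' = rW p w * p istar ^ m := by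
    rw [hw'def, rW_append, rW_replicate]
  have hxw : x ∈ ΦW φ w '' F := by
    rw [hw'def, ΦW_append, Set.image_comp] at hw
    obtain ⟨y, hy, hyx⟩ := hw
    exact ⟨y, ΦW_image_subset hFsub _ hy, hyx⟩
  have hrWw0 : 0 < rW r w := rW_pos hr0 w
  have hrWw'0 : 0 < rW r w' := rW_pos hr0 w'
  have hpWw0 : 0 < rW p w := rW_pos hp0 w
  set R1 := D * rW r w with hR1
  set r1 := c * rW r w' with hr1def
  have hr1pos : 0 < r1 := by positivity
  have hR1pos : 0 < R1 := by positivity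
  have hqm1 : q ^ m ≤ 1 := pow_le_one₀ (le_of_lt hq0) (le_of_lt hq1)
  have hrR : r1 < R1 := by
    rw [hr1def, hR1, hrw']
    calc c * (rW r w * q ^ m) = c * q ^ m * rW r w := by ring
    _ ≤ c * 1 * rW r w := by
        apply mul_le_mul_of_nonneg_right _ (le_of_lt hrWw0)
        exact mul_le_mul_of_nonneg_left hqm1 (le_of_lt hc0)
    _ = c * rW r w := by ring
    _ < D * rW r w := mul_lt_mul_of_pos_right hcD hrWw0
  refine ⟨r1, R1, hr1pos, hrR, ?_⟩
  intro hcontra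
  have hF1 : μ F = 1 := by
    have h := measure_add_measure_compl (μ := μ) hFc.isClosed.measurableSet
    rw [hF0, add_zero, measure_univ] at h
    exact h
  have hcylmeas : ∀ v : List Λ, μ (ΦW φ v '' F) = ENNReal.ofReal (rW p v) := by
    intro v
    rw [measure_cyl hμ hcont hinj hSSC hF0 hFsub (fun i => le_of_lt (hp0 i)) _ hFc
      (Set.Subset.refl F), hF1, mul_one]
  -- lower bound for the big ball
  have hBR : ENNReal.ofReal (rW p w) ≤ μ (closedBall x R1) := by
    rw [← hcylmeas w]
    exact measure_mono (cyl_subset_ball hsim hr0 hFc.isBounded hxw)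
  -- upper bound for the small ball
  have hBr : μ (closedBall x r1) ≤ ENNReal.ofReal (rW p w') := by
    have hball : closedBall x r1 ∩ F ⊆ ΦW φ w' '' F := by
      apply ball_inter_subset_cyl hFsub hcov hsim hr0 (fun i => le_of_lt (hr1 i))
        hδpos hδ hw
      rw [hr1def, hc]
      have := rW_pos hr0 w'
      nlinarith
    calc μ (closedBall x r1) ≤ μ (ΦW φ w' '' F ∪ Fᶜ) := by
          apply measure_mono
          intro y hy
          by_cases hyF : y ∈ F
          · exact Or.inl (hball ⟨hy, hyF⟩)
          · exact Or.inr hyF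
    _ ≤ μ (ΦW φ w' '' F) + μ Fᶜ := measure_union_le _ _
    _ = ENNReal.ofReal (rW p w') := by rw [hF0, add_zero, hcylmeas]
  -- derive the real inequality
  have hreal : rW p w ≤ C * (R1 / r1) ^ s * rW p w' := by
    have h1 : ENNReal.ofReal (rW p w) ≤
        ENNReal.ofReal (C * (R1 / r1) ^ s * rW p w') := by
      calc ENNReal.ofReal (rW p w) ≤ μ (closedBall x R1) := hBR
      _ ≤ ENNReal.ofReal (C * (R1 / r1) ^ s) * μ (closedBall x r1) := hcontra
      _ ≤ ENNReal.ofReal (C * (R1 / r1) ^ s) * ENNReal.ofReal (rW p w') :=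
          mul_le_mul_right hBr _
      _ = ENNReal.ofReal (C * (R1 / r1) ^ s * rW p w') := by
          rw [← ENNReal.ofReal_mul (by positivity)]
    refine (ENNReal.ofReal_le_ofReal_iff ?_).mp h1
    have := rW_pos hp0 w'
    positivity
  -- but the right-hand side is strictly smaller
  have hRr : R1 / r1 = D / c * (1 / q ^ m) := by
    rw [hR1, hr1def, hrw']
    field_simp
  have hcompute : C * (R1 / r1) ^ s * p istar ^ m
      = C * (D / c) ^ s * (q ^ (sstar - s)) ^ m := by
    rw [hRr, hstar]
    rw [Real.mul_rpow (by positivity) (by positivity : (0:ℝ) ≤ 1 / q ^ m)]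
    rw [← Real.rpow_natCast (q ^ sstar) m, ← Real.rpow_natCast q m,
      ← Real.rpow_natCast (q ^ (sstar - s)) m]
    rw [← Real.rpow_mul (le_of_lt hq0), ← Real.rpow_mul (le_of_lt hq0)]
    have e1 : (1 / q ^ ((m:ℕ):ℝ)) ^ s = q ^ (-(((m:ℕ):ℝ) * s)) := by
      rw [one_div, ← Real.rpow_neg_one (q ^ ((m:ℕ):ℝ)), ← Real.rpow_mul (le_of_lt hq0),
        ← Real.rpow_mul (le_of_lt hq0)]
      congr 1
      ring
    rw [e1, mul_assoc, mul_assoc, ← Real.rpow_add hq0]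
    rw [show -(((m:ℕ):ℝ) * s) + sstar * ((m:ℕ):ℝ) = (sstar - s) * ((m:ℕ):ℝ) by ring]
    ring
  have hlt : C * (R1 / r1) ^ s * rW p w' < rW p w := by
    rw [hpw']
    calc C * (R1 / r1) ^ s * (rW p w * p istar ^ m)
        = rW p w * (C * (R1 / r1) ^ s * p istar ^ m) := by ring
    _ = rW p w * (C * (D / c) ^ s * (q ^ (sstar - s)) ^ m) := by rw [hcompute]
    _ < rW p w * 1 := mul_lt_mul_of_pos_left hmkey hpWw0
    _ = rW p w := mul_one _
  linarith

end Main

end SelfSimAux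

/-- The pointwise Assouad dimension of a measure `μ` at a point `x`. -/
noncomputable def pwAssouadDim {X : Type*} [PseudoMetricSpace X] [MeasurableSpace X]
    (μ : Measure X) (x : X) : ℝ≥0∞ :=
  sInf (ENNReal.ofReal '' {s : ℝ | 0 < s ∧ ∃ C : ℝ, 0 < C ∧ ∀ r R : ℝ, 0 < r → r < R →
    μ (closedBall x R) ≤ ENNReal.ofReal (C * (R / r) ^ s) * μ (closedBall x r)})

/-- The global Assouad dimension of a measure `μ` supported on the set `F`. -/
noncomputable def assouadDimOn {X : Type*} [PseudoMetricSpace X] [MeasurableSpace X]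
    (μ : Measure X) (F : Set X) : ℝ≥0∞ :=
  sInf (ENNReal.ofReal '' {s : ℝ | 0 < s ∧ ∃ C : ℝ, 0 < C ∧ ∀ x ∈ F, ∀ r R : ℝ, 0 < r → r < R →
    μ (closedBall x R) ≤ ENNReal.ofReal (C * (R / r) ^ s) * μ (closedBall x r)})

open SelfSimAux

/-- For a self-similar measure on a strongly separated self-similar set,
the pointwise Assouad dimension equals `max_i log p_i / log r_i`, which is the global
Assouad dimension, at `μ`-almost every point. -/
theorem selfSimilar_SSC_pwAssouadDim_ae {d : ℕ} {Λ : Type*} [Fintype Λ] [Nonempty Λ]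
    (φ : Λ → EuclideanSpace ℝ (Fin d) → EuclideanSpace ℝ (Fin d))
    (r : Λ → ℝ) (hr : ∀ i, r i ∈ Set.Ioo (0 : ℝ) 1)
    (hsim : ∀ i, ∀ x y, dist (φ i x) (φ i y) = r i * dist x y)
    (F : Set (EuclideanSpace ℝ (Fin d)))
    (hFc : IsCompact F) (hFne : F.Nonempty)
    (hFinv : F = ⋃ i, φ i '' F)
    (hSSC : ∀ i j : Λ, i ≠ j → Disjoint (φ i '' F) (φ j '' F))
    (p : Λ → ℝ) (hp : ∀ i, p i ∈ Set.Ioo (0 : ℝ) 1) (hpsum : ∑ i : Λ, p i = 1)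
    (μ : Measure (EuclideanSpace ℝ (Fin d))) [IsProbabilityMeasure μ]
    (hμ : μ = ∑ i : Λ, ENNReal.ofReal (p i) • μ.map (φ i)) :
    (∀ᵐ x ∂μ, pwAssouadDim μ x =
      ⨆ i : Λ, ENNReal.ofReal (Real.log (p i) / Real.log (r i))) ∧
    assouadDimOn μ F = ⨆ i : Λ, ENNReal.ofReal (Real.log (p i) / Real.log (r i)) := by
  classical
  have hr0 : ∀ i, 0 < r i := fun i => (hr i).1
  have hr1 : ∀ i, r i < 1 := fun i => (hr i).2
  have hp0 : ∀ i, 0 < p i := fun i => (hp i).1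
  have hp1 : ∀ i, p i < 1 := fun i => (hp i).2
  have hcont : ∀ i, Continuous (φ i) := by
    intro i
    refine (LipschitzWith.of_dist_le_mul (K := (r i).toNNReal) (f := φ i) ?_).continuous
    intro x y
    rw [Real.coe_toNNReal _ (le_of_lt (hr0 i)), hsim]
  have hinj : ∀ i, Function.Injective (φ i) := by
    intro i x y hxy
    have h := hsim i x y
    rw [hxy, dist_self] at h
    have hd : dist x y = 0 := by
      rcases mul_eq_zero.mp h.symm with h1 | h1
      · exact absurd h1 (hr0 i).ne'
      · exact h1
    exact dist_eq_zero.mp hd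
  have hFsub : ∀ i, φ i '' F ⊆ F := by
    intro i
    conv_rhs => rw [hFinv]
    exact Set.subset_iUnion (fun j => φ j '' F) i
  have hcov : ∀ x ∈ F, ∃ i, x ∈ φ i '' F := by
    intro x hx
    rw [hFinv] at hx
    exact Set.mem_iUnion.mp hx
  -- extreme contraction ratios
  obtain ⟨imin, -, hminspec⟩ :=
    Finset.exists_min_image Finset.univ r Finset.univ_nonempty
  set ρ₀ := r imin with hρ₀def
  have hρ₀0 : 0 < ρ₀ := hr0 _
  have hρ₀1 : ρ₀ ≤ 1 := le_of_lt (hr1 _)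
  have hρ₀ : ∀ i, ρ₀ ≤ r i := fun i => hminspec i (Finset.mem_univ i)
  obtain ⟨imax, -, hmaxspec⟩ :=
    Finset.exists_max_image Finset.univ r Finset.univ_nonempty
  set ρ := r imax with hρdef
  have hρ0 : 0 < ρ := hr0 _
  have hρ1 : ρ < 1 := hr1 _
  have hρ : ∀ i, r i ≤ ρ := fun i => hmaxspec i (Finset.mem_univ i)
  -- the dimension value
  obtain ⟨istar, -, hstarmax⟩ := Finset.exists_max_image Finset.univ
    (fun i => Real.log (p i) / Real.log (r i)) Finset.univ_nonempty
  set sstar := Real.log (p istar) / Real.log (r istar) with hsstardef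
  have hlogr : ∀ i, Real.log (r i) < 0 := fun i => Real.log_neg (hr0 i) (hr1 i)
  have hlogp : ∀ i, Real.log (p i) < 0 := fun i => Real.log_neg (hp0 i) (hp1 i)
  have hs0 : 0 < sstar := div_pos_of_neg_of_neg (hlogp istar) (hlogr istar)
  have hsmax : ∀ i, Real.log (p i) / Real.log (r i) ≤ sstar :=
    fun i => hstarmax i (Finset.mem_univ i)
  have hps : ∀ i, r i ^ sstar ≤ p i := by
    intro i
    rw [Real.rpow_def_of_pos (hr0 i), ← Real.exp_log (hp0 i)]
    apply Real.exp_le_exp.mpr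
    have h1 : sstar * Real.log (r i)
        ≤ Real.log (p i) / Real.log (r i) * Real.log (r i) :=
      mul_le_mul_of_nonpos_right (hsmax i) (le_of_lt (hlogr i))
    rw [div_mul_cancel₀ _ (ne_of_lt (hlogr i))] at h1
    linarith [h1]
  have hstar : p istar = r istar ^ sstar := by
    rw [Real.rpow_def_of_pos (hr0 istar), hsstardef, mul_comm,
      div_mul_cancel₀ _ (ne_of_lt (hlogr istar)), Real.exp_log (hp0 istar)]
  -- two distinct indices
  have hpair : ∃ i j : Λ, i ≠ j := by
    by_contra h
    push_neg at h
    obtain ⟨i0⟩ := (inferInstance : Nonempty Λ)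
    have huniv : (Finset.univ : Finset Λ) = {i0} := by
      ext j; simp [h j i0]
    rw [huniv, Finset.sum_singleton] at hpsum
    exact absurd hpsum (ne_of_lt (hp1 i0))
  -- separation constant
  obtain ⟨δ, hδpos, hδ⟩ := exists_delta hFc hcont hSSC hFne
  have hδD : δ ≤ diam F := by
    obtain ⟨i, j, hij⟩ := hpair
    obtain ⟨a, ha⟩ := hFne.image (φ i)
    obtain ⟨b, hb⟩ := hFne.image (φ j)
    calc δ ≤ dist a b := hδ i j hij a ha b hb
    _ ≤ diam F := dist_le_diam_of_mem hFc.isBounded (hFsub i ha) (hFsub j hb)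
  have hD0 : 0 < diam F := lt_of_lt_of_le hδpos hδD
  have hpsum1 : ∑ i, ENNReal.ofReal (p i) = 1 := by
    rw [← ENNReal.ofReal_sum_of_nonneg (fun i _ => le_of_lt (hp0 i)), hpsum,
      ENNReal.ofReal_one]
  have μFc : μ Fᶜ = 0 :=
    measure_compl_zero hμ hcont hsim hr0 hρ0 hρ1 hρ hFc hFne hFsub hpsum1
  -- the uniform upper bound
  obtain ⟨C₀, hC₀, hupper⟩ := upper_bound hμ hcont hinj hSSC μFc hFsub hcov hFc hFne
    hsim hr0 (fun i => le_of_lt (hr1 i)) hρ₀0 hρ₀ hρ₀1 hρ0 hρ1 hρ hδpos hδ hD0 hs0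
    hp0 (fun i => le_of_lt (hp1 i)) hps
  -- a distinguished point of F realizing the dimension
  have hnested : ∀ n : ℕ, ΦW φ (List.replicate (n + 1) istar) '' F
      ⊆ ΦW φ (List.replicate n istar) '' F := by
    intro n
    rw [List.replicate_succ', ΦW_append, Set.image_comp]
    exact Set.image_mono (ΦW_image_subset hFsub [istar])
  obtain ⟨xstar, hxstar⟩ :=
    IsCompact.nonempty_iInter_of_sequence_nonempty_isCompact_isClosed
      (fun n => ΦW φ (List.replicate n istar) '' F) hnested (fun n => hFne.image _)
      (hFc.image (ΦW_continuous hcont _))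
      (fun n => (hFc.image (ΦW_continuous hcont _)).isClosed)
  have hxstarF : xstar ∈ F := by
    have h0 := (Set.mem_iInter.mp hxstar) 0
    simpa [ΦW] using h0
  have hxstargood : ∀ n : ℕ, ∃ w : List Λ,
      xstar ∈ ΦW φ (w ++ List.replicate n istar) '' F :=
    fun n => ⟨[], by simpa using (Set.mem_iInter.mp hxstar) n⟩
  -- pointwise characterization at good points
  have hchar : ∀ x : EuclideanSpace ℝ (Fin d), x ∈ F →
      (∀ n : ℕ, ∃ w : List Λ, x ∈ ΦW φ (w ++ List.replicate n istar) '' F) →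
      pwAssouadDim μ x = ENNReal.ofReal sstar := by
    intro x hxF hxgood
    apply IsLeast.csInf_eq
    constructor
    · exact ⟨sstar, ⟨hs0, C₀, hC₀, fun r1 R1 h1 h2 => hupper x hxF r1 R1 h1 h2⟩, rfl⟩
    · rintro e ⟨s, ⟨hsp, C, hCp, hCfa⟩, rfl⟩
      apply ENNReal.ofReal_le_ofReal
      by_contra hlt
      push_neg at hlt
      obtain ⟨r1, R1, h1, h2, h3⟩ := lower_bound hμ hcont hinj hSSC μFc hFsub hcov
        hFc hFne hsim hr0 hr1 hδpos hδ hD0 hδD hp0 istar hs0 hstar hxF hxgood hlt hCp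
      exact h3 (hCfa r1 R1 h1 h2)
  have hsup : (⨆ i : Λ, ENNReal.ofReal (Real.log (p i) / Real.log (r i)))
      = ENNReal.ofReal sstar := by
    apply le_antisymm
    · exact iSup_le fun i => ENNReal.ofReal_le_ofReal (hsmax i)
    · exact le_iSup_of_le istar (le_of_eq (by rw [hsstardef]))
  constructor
  · rw [ae_iff]
    have hsub : {a | ¬ pwAssouadDim μ a =
        ⨆ i : Λ, ENNReal.ofReal (Real.log (p i) / Real.log (r i))}
        ⊆ Fᶜ ∪ ⋃ n : ℕ, {x | x ∈ F ∧
          ¬ ∃ w : List Λ, x ∈ ΦW φ (w ++ List.replicate n istar) '' F} := by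
      intro x hx
      simp only [Set.mem_setOf_eq] at hx
      by_cases hxF : x ∈ F
      · by_cases hxg : ∀ n : ℕ, ∃ w : List Λ,
            x ∈ ΦW φ (w ++ List.replicate n istar) '' F
        · exact absurd ((hchar x hxF hxg).trans hsup.symm) hx
        · push_neg at hxg
          obtain ⟨n, hn⟩ := hxg
          exact Or.inr (Set.mem_iUnion.mpr ⟨n, hxF, fun hw => hn hw.choose hw.choose_spec⟩)
      · exact Or.inl hxF
    refine measure_mono_null hsub ?_
    apply measure_union_null μFc
    apply measure_iUnion_null
    intro n
    exact bad_null hμ hcont hinj hSSC μFc hFsub hcov hFc hp0 hpsum istar n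
  · rw [hsup, assouadDimOn]
    apply IsLeast.csInf_eq
    constructor
    · exact ⟨sstar, ⟨hs0, C₀, hC₀, fun x hx r1 R1 h1 h2 => hupper x hx r1 R1 h1 h2⟩, rfl⟩
    · rintro e ⟨s, ⟨hsp, C, hCp, hCfa⟩, rfl⟩
      apply ENNReal.ofReal_le_ofReal
      by_contra hlt
      push_neg at hlt
      obtain ⟨r1, R1, h1, h2, h3⟩ := lower_bound hμ hcont hinj hSSC μFc hFsub hcov
        hFc hFne hsim hr0 hr1 hδpos hδ hD0 hδD hp0 istar hs0 hstar hxstarF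
        hxstargood hlt hCp
      exact h3 (hCfa xstar hxstarF r1 R1 h1 h2)
end
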